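/- arXiv:0804.4284 — 4 statements merged into one kernel-verified Lean document; each statement's English description precedes it below -/
import Mathlib

section
/- The event that the interference sums of all n nodes concentrate simultaneously has probability at least 1 − 2/n: Pr( for every node j, (1−ε₂)·E[I] ≤ I(j) ≤ (1+ε₂′)·E[I] ) ≥ 1 − 2/n, where ε₂ = sqrt( 4 ln n / ((n−1)·E[P]·E[L]) ) and ε₂′ = sqrt( 6 ln n / ((n−1)·E[P]·E[L]) ), provided ε₂ ≤ 1 and ε₂′ ≤ 1. -/
open MeasureTheory ProbabilityTheory

/-- The two-dimensional unit torus. -/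
abbrev Torus : Type := AddCircle (1 : ℝ) × AddCircle (1 : ℝ)

instance : (volume : Measure Torus).IsAddRightInvariant := by
  have : (volume : Measure Torus) = ((volume : Measure (AddCircle (1:ℝ))).prod volume) := rfl
  rw [this]; infer_instance

instance : IsProbabilityMeasure (volume : Measure Torus) := by
  constructor
  rw [show (Set.univ : Set Torus) = Set.univ ×ˢ Set.univ by simp,
    show (volume : Measure Torus) = (volume : Measure (AddCircle (1:ℝ))).prod volume from rfl,
    Measure.prod_prod, AddCircle.measure_univ]
  simp

/-! ### Analytic inequalities -/

lemma log_le_half_sub (y : ℝ) (hy : 1 ≤ y) : Real.log y ≤ (y - y⁻¹)/2 := by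
  set f : ℝ → ℝ := fun y => (y - y⁻¹)/2 - Real.log y with hf
  have hderiv : ∀ x : ℝ, 0 < x → HasDerivAt f ((1 - (-(x^2)⁻¹))/2 - x⁻¹) x := by
    intro x hx0
    exact (((hasDerivAt_id x).sub (hasDerivAt_inv hx0.ne')).div_const 2).sub
      (Real.hasDerivAt_log hx0.ne')
  have hmono : MonotoneOn f (Set.Ici 1) := by
    apply monotoneOn_of_deriv_nonneg (convex_Ici 1)
    · apply ContinuousOn.sub
      · exact (continuousOn_id.sub (continuousOn_inv₀.mono
          (fun x hx => by simp at hx ⊢; positivity))).div_const 2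
      · exact Real.continuousOn_log.mono (fun x hx => by simp at hx ⊢; positivity)
    · intro x hx
      rw [interior_Ici] at hx
      exact (hderiv x (lt_trans one_pos hx)).differentiableAt.differentiableWithinAt
    · intro x hx
      rw [interior_Ici] at hx
      have hx0 : (0:ℝ) < x := lt_trans one_pos hx
      rw [(hderiv x hx0).deriv]
      have : (1 - (-(x^2)⁻¹))/2 - x⁻¹ = (x-1)^2/(2*x^2) := by field_simp; ring
      rw [this]; positivity
  have := hmono (Set.self_mem_Ici) (show y ∈ Set.Ici 1 from hy) hy
  simp only [hf, Real.log_one, inv_one] at this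
  linarith

lemma psi_ineq {ε : ℝ} (h0 : 0 ≤ ε) (h1 : ε < 1) :
    ε^2/2 ≤ (1-ε)*Real.log (1-ε) + ε := by
  have hpos : (0:ℝ) < 1 - ε := by linarith
  have hy : 1 ≤ (1-ε)⁻¹ := (one_le_inv₀ hpos).mpr (by linarith)
  have h := log_le_half_sub ((1-ε)⁻¹) hy
  rw [Real.log_inv, inv_inv] at h
  have h2 : (1-ε) * (-Real.log (1-ε)) ≤ (1-ε) * (((1-ε)⁻¹ - (1-ε))/2) :=
    mul_le_mul_of_nonneg_left h hpos.le
  have h3 : (1-ε) * (((1-ε)⁻¹ - (1-ε))/2) = ε - ε^2/2 := by field_simp; ring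
  nlinarith [h2]

/-! ### Chernoff bounds -/

section Chernoff

variable {Ω : Type*} [MeasureSpace Ω] [IsProbabilityMeasure (ℙ : Measure Ω)]

lemma integrable_exp_mul_of_bounded {f : Ω → ℝ} (hf : Measurable f)
    (h : ∀ ω, f ω ∈ Set.Icc (0:ℝ) 1) (t : ℝ) :
    Integrable (fun ω => Real.exp (t * f ω)) ℙ := by
  refine Integrable.mono' (integrable_const (Real.exp |t|))
    ((hf.const_mul t).exp.aestronglyMeasurable) ?_
  filter_upwards with ω
  rw [Real.norm_eq_abs, Real.abs_exp, Real.exp_le_exp]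
  calc t * f ω ≤ |t * f ω| := le_abs_self _
    _ = |t| * |f ω| := abs_mul _ _
    _ ≤ |t| * 1 := by
        refine mul_le_mul_of_nonneg_left ?_ (abs_nonneg t)
        rw [abs_le]; exact ⟨le_trans (by norm_num) (h ω).1, (h ω).2⟩
    _ = |t| := mul_one _

lemma integrable_of_bounded01 {f : Ω → ℝ} (hf : Measurable f)
    (h : ∀ ω, f ω ∈ Set.Icc (0:ℝ) 1) : Integrable f ℙ := by
  refine Integrable.mono' (integrable_const 1) hf.aestronglyMeasurable ?_
  filter_upwards with ω
  rw [Real.norm_eq_abs, abs_le]; exact ⟨le_trans (by norm_num) (h ω).1, (h ω).2⟩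

lemma mgf_le_exp_mean {f : Ω → ℝ} (hf : Measurable f)
    (h : ∀ ω, f ω ∈ Set.Icc (0:ℝ) 1) (t : ℝ) :
    mgf f ℙ t ≤ Real.exp ((∫ ω, f ω ∂ℙ) * (Real.exp t - 1)) := by
  have hint : Integrable f ℙ := integrable_of_bounded01 hf h
  have h1 : mgf f ℙ t ≤ ∫ ω, (1 + f ω * (Real.exp t - 1)) ∂ℙ := by
    refine integral_mono (integrable_exp_mul_of_bounded hf h t)
      ((integrable_const 1).add (hint.mul_const _)) ?_
    intro ω
    have hc := convexOn_exp.2 (Set.mem_univ (0:ℝ)) (Set.mem_univ t)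
      (by linarith [(h ω).2] : (0:ℝ) ≤ 1 - f ω) (h ω).1 (by ring)
    simp only [smul_eq_mul, mul_zero, zero_add, Real.exp_zero, mul_one] at hc
    calc Real.exp (t * f ω) = Real.exp ((1 - f ω) * 0 + f ω * t) := by ring_nf
      _ ≤ (1 - f ω) * 1 + f ω * Real.exp t := by
          simpa [Real.exp_zero] using hc
      _ = 1 + f ω * (Real.exp t - 1) := by ring
  have h2 : ∫ ω, (1 + f ω * (Real.exp t - 1)) ∂ℙ
      = 1 + (∫ ω, f ω ∂ℙ) * (Real.exp t - 1) := by
    rw [integral_add (integrable_const 1) (hint.mul_const _), integral_const]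
    simp [integral_mul_const]
  rw [h2] at h1
  exact h1.trans (by linarith [Real.add_one_le_exp ((∫ ω, f ω ∂ℙ) * (Real.exp t - 1))])

variable {ι : Type*} [Fintype ι]

lemma sum_integral_nonneg {f : ι → Ω → ℝ} (h01 : ∀ i ω, f i ω ∈ Set.Icc (0:ℝ) 1) :
    0 ≤ ∑ i, ∫ ω, f i ω ∂ℙ :=
  Finset.sum_nonneg fun i _ => integral_nonneg fun ω => (h01 i ω).1

/-- Multiplicative Chernoff lower-tail bound. -/
lemma chernoff_lower {f : ι → Ω → ℝ}
    (hindep : iIndepFun f ℙ)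
    (hmeas : ∀ i, Measurable (f i)) (h01 : ∀ i ω, f i ω ∈ Set.Icc (0:ℝ) 1)
    (m : ℝ) (hm : ∑ i, ∫ ω, f i ω ∂ℙ = m) (ε : ℝ) (hε0 : 0 ≤ ε) (hε1 : ε ≤ 1) :
    ℙ {ω | ∑ i, f i ω < (1 - ε) * m} ≤ ENNReal.ofReal (Real.exp (-(ε^2 * m) / 2)) := by
  have hm0 : 0 ≤ m := hm ▸ sum_integral_nonneg h01
  rcases eq_or_lt_of_le hε1 with rfl | hεlt
  · have : {ω | ∑ i, f i ω < (1 - 1) * m} = ∅ := by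
      ext ω
      simp only [Set.mem_setOf_eq, Set.mem_empty_iff_false, iff_false, not_lt, sub_self,
        zero_mul]
      exact Finset.sum_nonneg fun i _ => (h01 i ω).1
    rw [this]; simp
  · set t := Real.log (1 - ε) with ht_def
    have h1ε : (0:ℝ) < 1 - ε := by linarith
    have ht : t ≤ 0 := Real.log_nonpos (by linarith) (by linarith)
    have hexpt : Real.exp t = 1 - ε := Real.exp_log h1ε
    set S := ∑ i, f i with hS
    have hSapp : ∀ ω, S ω = ∑ i, f i ω := fun ω => by simp [hS, Finset.sum_apply]
    have hSmeas : Measurable S := by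
      have : Measurable fun ω => ∑ i, f i ω := Finset.measurable_sum _ fun i _ => hmeas i
      convert this using 1; funext ω; simp [hS, Finset.sum_apply]
    have hSnn : ∀ ω, 0 ≤ S ω := fun ω => by
      rw [hSapp]; exact Finset.sum_nonneg fun i _ => (h01 i ω).1
    have hScard : ∀ ω, S ω ≤ Fintype.card ι := fun ω => by
      rw [hSapp]
      calc ∑ i, f i ω ≤ ∑ _i : ι, (1:ℝ) := Finset.sum_le_sum fun i _ => (h01 i ω).2
        _ = Fintype.card ι := by simp
    have hint : Integrable (fun ω => Real.exp (t * S ω)) ℙ := by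
      refine Integrable.mono' (integrable_const (Real.exp (|t| * Fintype.card ι)))
        ((hSmeas.const_mul t).exp.aestronglyMeasurable) ?_
      filter_upwards with ω
      rw [Real.norm_eq_abs, Real.abs_exp, Real.exp_le_exp]
      calc t * S ω ≤ |t| * S ω := mul_le_mul_of_nonneg_right (le_abs_self t) (hSnn ω)
        _ ≤ |t| * Fintype.card ι := mul_le_mul_of_nonneg_left (hScard ω) (abs_nonneg t)
    have hcher := measure_le_le_exp_mul_mgf (X := S) (μ := ℙ) ((1-ε)*m) ht hint
    have hmgf : mgf S ℙ t ≤ Real.exp (m * (Real.exp t - 1)) := by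
      rw [hS, iIndepFun.mgf_sum hindep hmeas]
      calc ∏ i, mgf (f i) ℙ t ≤ ∏ i, Real.exp ((∫ ω, f i ω ∂ℙ) * (Real.exp t - 1)) := by
            refine Finset.prod_le_prod (fun i _ => mgf_nonneg) ?_
            exact fun i _ => mgf_le_exp_mean (hmeas i) (h01 i) t
        _ = Real.exp (∑ i, (∫ ω, f i ω ∂ℙ) * (Real.exp t - 1)) := (Real.exp_sum _ _).symm
        _ = Real.exp (m * (Real.exp t - 1)) := by rw [← Finset.sum_mul, hm]
    have hreal : (ℙ {ω | S ω ≤ (1-ε)*m}).toReal ≤ Real.exp (-(ε^2*m)/2) := by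
      refine hcher.trans ?_
      calc Real.exp (-t * ((1-ε)*m)) * mgf S ℙ t
          ≤ Real.exp (-t * ((1-ε)*m)) * Real.exp (m * (Real.exp t - 1)) := by
            exact mul_le_mul_of_nonneg_left hmgf (Real.exp_nonneg _)
        _ = Real.exp (-t * ((1-ε)*m) + m * (Real.exp t - 1)) := (Real.exp_add _ _).symm
        _ ≤ Real.exp (-(ε^2*m)/2) := by
            rw [Real.exp_le_exp, hexpt]
            have hpsi := psi_ineq hε0 hεlt
            have : -t * ((1-ε)*m) + m * ((1-ε) - 1)
                = m * (-( (1-ε) * Real.log (1-ε)) - ε) := by rw [ht_def]; ring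
            rw [this]
            have h2 : -((1-ε) * Real.log (1-ε)) - ε ≤ -(ε^2/2) := by linarith
            calc m * (-( (1-ε) * Real.log (1-ε)) - ε) ≤ m * (-(ε^2/2)) :=
                  mul_le_mul_of_nonneg_left h2 hm0
              _ = -(ε^2*m)/2 := by ring
    calc ℙ {ω | ∑ i, f i ω < (1-ε)*m} ≤ ℙ {ω | S ω ≤ (1-ε)*m} := by
          refine measure_mono fun ω hω => ?_
          simp only [Set.mem_setOf_eq] at hω ⊢
          rw [hSapp]; exact le_of_lt hω
      _ = ENNReal.ofReal ((ℙ {ω | S ω ≤ (1-ε)*m}).toReal) := by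
          rw [ENNReal.ofReal_toReal (measure_ne_top _ _)]
      _ ≤ ENNReal.ofReal (Real.exp (-(ε^2*m)/2)) := ENNReal.ofReal_le_ofReal hreal

/-- Multiplicative Chernoff upper-tail bound. -/
lemma chernoff_upper {f : ι → Ω → ℝ}
    (hindep : iIndepFun f ℙ)
    (hmeas : ∀ i, Measurable (f i)) (h01 : ∀ i ω, f i ω ∈ Set.Icc (0:ℝ) 1)
    (m : ℝ) (hm : ∑ i, ∫ ω, f i ω ∂ℙ = m) (ε : ℝ) (hε0 : 0 ≤ ε) (hε1 : ε ≤ 1) :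
    ℙ {ω | (1 + ε) * m < ∑ i, f i ω} ≤ ENNReal.ofReal (Real.exp (-(ε^2 * m) / 3)) := by
  have hm0 : 0 ≤ m := hm ▸ sum_integral_nonneg h01
  set t := 2 * ε / 3 with ht_def
  have ht : 0 ≤ t := by positivity
  have htle : |t| ≤ 1 := by
    rw [abs_of_nonneg ht]; rw [ht_def]; linarith
  have hexp : Real.exp t ≤ 1 + t + 3/4 * t^2 := by
    have h := Real.exp_bound htle (n := 2) (by norm_num)
    rw [abs_le] at h
    have h2 := h.2
    simp only [Finset.sum_range_succ, Finset.sum_range_zero] at h2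
    norm_num at h2
    nlinarith [sq_abs t, h2]
  set S := ∑ i, f i with hS
  have hSapp : ∀ ω, S ω = ∑ i, f i ω := fun ω => by simp [hS, Finset.sum_apply]
  have hSmeas : Measurable S := by
    have : Measurable fun ω => ∑ i, f i ω := Finset.measurable_sum _ fun i _ => hmeas i
    convert this using 1; funext ω; simp [hS, Finset.sum_apply]
  have hSnn : ∀ ω, 0 ≤ S ω := fun ω => by
    rw [hSapp]; exact Finset.sum_nonneg fun i _ => (h01 i ω).1
  have hScard : ∀ ω, S ω ≤ Fintype.card ι := fun ω => by
    rw [hSapp]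
    calc ∑ i, f i ω ≤ ∑ _i : ι, (1:ℝ) := Finset.sum_le_sum fun i _ => (h01 i ω).2
      _ = Fintype.card ι := by simp
  have hint : Integrable (fun ω => Real.exp (t * S ω)) ℙ := by
    refine Integrable.mono' (integrable_const (Real.exp (|t| * Fintype.card ι)))
      ((hSmeas.const_mul t).exp.aestronglyMeasurable) ?_
    filter_upwards with ω
    rw [Real.norm_eq_abs, Real.abs_exp, Real.exp_le_exp]
    calc t * S ω ≤ |t| * S ω := mul_le_mul_of_nonneg_right (le_abs_self t) (hSnn ω)
      _ ≤ |t| * Fintype.card ι := mul_le_mul_of_nonneg_left (hScard ω) (abs_nonneg t)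
  have hcher := measure_ge_le_exp_mul_mgf (X := S) (μ := ℙ) ((1+ε)*m) ht hint
  have hmgf : mgf S ℙ t ≤ Real.exp (m * (Real.exp t - 1)) := by
    rw [hS, iIndepFun.mgf_sum hindep hmeas]
    calc ∏ i, mgf (f i) ℙ t ≤ ∏ i, Real.exp ((∫ ω, f i ω ∂ℙ) * (Real.exp t - 1)) := by
          refine Finset.prod_le_prod (fun i _ => mgf_nonneg) ?_
          exact fun i _ => mgf_le_exp_mean (hmeas i) (h01 i) t
      _ = Real.exp (∑ i, (∫ ω, f i ω ∂ℙ) * (Real.exp t - 1)) := (Real.exp_sum _ _).symm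
      _ = Real.exp (m * (Real.exp t - 1)) := by rw [← Finset.sum_mul, hm]
  have hreal : (ℙ {ω | (1+ε)*m ≤ S ω}).toReal ≤ Real.exp (-(ε^2*m)/3) := by
    refine hcher.trans ?_
    calc Real.exp (-t * ((1+ε)*m)) * mgf S ℙ t
        ≤ Real.exp (-t * ((1+ε)*m)) * Real.exp (m * (Real.exp t - 1)) :=
          mul_le_mul_of_nonneg_left hmgf (Real.exp_nonneg _)
      _ = Real.exp (-t * ((1+ε)*m) + m * (Real.exp t - 1)) := (Real.exp_add _ _).symm
      _ ≤ Real.exp (-(ε^2*m)/3) := by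
          rw [Real.exp_le_exp]
          have h1 : m * (Real.exp t - 1) ≤ m * (t + 3/4*t^2) :=
            mul_le_mul_of_nonneg_left (by linarith) hm0
          have key : -t * ((1+ε)*m) + m * (Real.exp t - 1)
              ≤ m * (-(t*ε) + 3/4*t^2) := by
            calc -t * ((1+ε)*m) + m * (Real.exp t - 1)
                ≤ -t * ((1+ε)*m) + m * (t + 3/4*t^2) := by linarith
              _ = m * (-(t*ε) + 3/4*t^2) := by ring
          refine key.trans (le_of_eq ?_)
          rw [ht_def]; ring
  calc ℙ {ω | (1+ε)*m < ∑ i, f i ω} ≤ ℙ {ω | (1+ε)*m ≤ S ω} := by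
        refine measure_mono fun ω hω => ?_
        simp only [Set.mem_setOf_eq] at hω ⊢
        rw [hSapp]; exact le_of_lt hω
    _ = ENNReal.ofReal ((ℙ {ω | (1+ε)*m ≤ S ω}).toReal) := by
        rw [ENNReal.ofReal_toReal (measure_ne_top _ _)]
    _ ≤ ENNReal.ofReal (Real.exp (-(ε^2*m)/3)) := ENNReal.ofReal_le_ofReal hreal

end Chernoff

/-! ### Independence machinery -/

lemma map_prod_of_fiberwise {α β γ : Type*} [MeasurableSpace α] [MeasurableSpace β]
    [MeasurableSpace γ] (μ : Measure α) (ν : Measure β) [SFinite μ] [SFinite ν]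
    [IsProbabilityMeasure ν] (ρ : Measure γ) (F : α × β → γ) (hF : Measurable F)
    (hfib : ∀ b, Measure.map (fun a => F (a, b)) μ = ρ) :
    Measure.map F (μ.prod ν) = ρ := by
  ext s hs
  rw [Measure.map_apply hF hs, Measure.prod_apply_symm (hF hs)]
  have heq : ∀ b, μ ((fun a => (a, b)) ⁻¹' (F ⁻¹' s)) = ρ s := by
    intro b
    have hsec : Measurable (fun a => F (a, b)) :=
      hF.comp (measurable_id.prodMk measurable_const)
    rw [show (fun a => (a,b)) ⁻¹' (F ⁻¹' s) = (fun a => F (a,b)) ⁻¹' s from rfl,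
      ← Measure.map_apply hsec hs, hfib b]
  simp_rw [heq]
  rw [lintegral_const, measure_univ, mul_one]

section Indep

variable {Ω : Type*} [MeasureSpace Ω] [IsProbabilityMeasure (ℙ : Measure Ω)]

lemma map_pi_of_iIndepFun {ι : Type*} [Fintype ι] {β : Type*} [MeasurableSpace β]
    (f : ι → Ω → β) (hf : ∀ i, Measurable (f i))
    (hindep : iIndepFun f ℙ) :
    Measure.map (fun ω i => f i ω) ℙ = Measure.pi (fun i => Measure.map (f i) ℙ) := by
  haveI : ∀ i, IsProbabilityMeasure (Measure.map (f i) ℙ) :=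
    fun i => Measure.isProbabilityMeasure_map (hf i).aemeasurable
  refine (Measure.pi_eq fun s hs => ?_).symm
  have hvec : Measurable (fun ω (i : ι) => f i ω) := measurable_pi_lambda _ hf
  rw [Measure.map_apply hvec (MeasurableSet.univ_pi hs)]
  have hpre : (fun ω (i : ι) => f i ω) ⁻¹' (Set.univ.pi s) = ⋂ i ∈ Finset.univ, f i ⁻¹' s i := by
    ext ω; simp [Set.mem_univ_pi]
  rw [hpre, hindep.measure_inter_preimage_eq_mul Finset.univ (fun i _ => hs i)]
  exact Finset.prod_congr rfl fun i _ => (Measure.map_apply (hf i) (hs i)).symm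

lemma iIndepFun_of_map_pi {ι : Type*} [Fintype ι] {β : Type*} [MeasurableSpace β]
    (f : ι → Ω → β) (hf : ∀ i, Measurable (f i))
    (η : ι → Measure β) [∀ i, IsProbabilityMeasure (η i)]
    (h : Measure.map (fun ω i => f i ω) ℙ = Measure.pi η) :
    iIndepFun f ℙ := by
  classical
  have hvec : Measurable (fun ω (i : ι) => f i ω) := measurable_pi_lambda _ hf
  have key : ∀ (s : ι → Set β), (∀ i, MeasurableSet (s i)) →
      ℙ (⋂ i, f i ⁻¹' s i) = ∏ i, η i (s i) := by
    intro s hs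
    have hpre : (⋂ i, f i ⁻¹' s i) = (fun ω (i : ι) => f i ω) ⁻¹' (Set.univ.pi s) := by
      ext ω; simp [Set.mem_univ_pi]
    rw [hpre, ← Measure.map_apply hvec (MeasurableSet.univ_pi hs), h, Measure.pi_pi]
  have single : ∀ i (s : Set β), MeasurableSet s → ℙ (f i ⁻¹' s) = η i s := by
    intro i s hs
    have hk := key (Function.update (fun _ => Set.univ) i s)
      (fun k => by
        rcases eq_or_ne k i with rfl | hne
        · simpa using hs
        · simp [Function.update_of_ne hne])
    have h1 : (⋂ k, f k ⁻¹' (Function.update (fun _ => Set.univ) i s k)) = f i ⁻¹' s := by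
      ext ω
      simp only [Set.mem_iInter, Set.mem_preimage]
      constructor
      · intro hh; have := hh i; rwa [Function.update_self] at this
      · intro hh k
        rcases eq_or_ne k i with rfl | hne
        · rwa [Function.update_self]
        · simp [Function.update_of_ne hne]
    have h2 : ∏ k, η k (Function.update (fun _ => Set.univ) i s k) = η i s := by
      have hterm : ∀ k, η k (Function.update (fun _ => Set.univ) i s k)
          = if k = i then η i s else 1 := by
        intro k
        rcases eq_or_ne k i with rfl | hne
        · simp
        · simp [Function.update_of_ne hne, if_neg hne]
      rw [Finset.prod_congr rfl fun k _ => hterm k]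
      simp
    rw [h1, h2] at hk; exact hk
  rw [iIndepFun_iff_measure_inter_preimage_eq_mul]
  intro S sets hsets
  set s' : ι → Set β := fun k => if k ∈ S then sets k else Set.univ with hs'
  have hs'meas : ∀ k, MeasurableSet (s' k) := fun k => by
    by_cases hk : k ∈ S
    · simp only [hs', if_pos hk]; exact hsets k hk
    · simp only [hs', if_neg hk]; exact MeasurableSet.univ
  have h1 : (⋂ k ∈ S, f k ⁻¹' sets k) = ⋂ k, f k ⁻¹' s' k := by
    ext ω
    simp only [Set.mem_iInter, Set.mem_preimage, hs']
    constructor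
    · intro hh k
      by_cases hk : k ∈ S
      · rw [if_pos hk]; exact hh k hk
      · rw [if_neg hk]; trivial
    · intro hh k hk
      have := hh k; rwa [if_pos hk] at this
  rw [h1, key s' hs'meas]
  have h2 : ∀ k, η k (s' k) = if k ∈ S then ℙ (f k ⁻¹' sets k) else 1 := by
    intro k
    by_cases hk : k ∈ S
    · simp only [hs', if_pos hk]; exact (single k (sets k) (hsets k hk)).symm
    · simp only [hs', if_neg hk]; exact measure_univ
  rw [Finset.prod_congr rfl (fun k _ => h2 k), Finset.prod_ite_mem Finset.univ S,
    Finset.univ_inter]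

lemma interference_terms_indep {n : ℕ}
    (X : Fin n → Ω → Torus) (hXmeas : ∀ j, Measurable (X j))
    (hXindep : iIndepFun X ℙ)
    (hXunif : ∀ j, Measure.map (X j) ℙ = (volume : Measure Torus))
    (P : Fin n → Ω → ℝ) (hPmeas : ∀ k, Measurable (P k))
    (hPindep : iIndepFun P ℙ)
    (hPXindep : IndepFun (fun ω => fun k => P k ω) (fun ω => fun k => X k ω) ℙ)
    (j : Fin n) :
    iIndepFun
      (fun (k : {k : Fin n // k ≠ j}) (ω : Ω) => (P k.1 ω, X k.1 ω - X j ω)) ℙ := by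
  classical
  set ι' := {k : Fin n // k ≠ j}
  set νP : Fin n → Measure ℝ := fun i => Measure.map (P i) ℙ with hνP
  haveI : ∀ i, IsProbabilityMeasure (νP i) :=
    fun i => Measure.isProbabilityMeasure_map (hPmeas i).aemeasurable
  have hXvecMeas : Measurable (fun ω (i : Fin n) => X i ω) := measurable_pi_lambda _ hXmeas
  have hPvecMeas : Measurable (fun ω (i : Fin n) => P i ω) := measurable_pi_lambda _ hPmeas
  have hlawX : Measure.map (fun ω (i : Fin n) => X i ω) ℙ
      = Measure.pi (fun _ : Fin n => (volume : Measure Torus)) := by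
    rw [map_pi_of_iIndepFun X hXmeas hXindep]
    congr 1
    funext i
    exact hXunif i
  have hlawP : Measure.map (fun ω (i : Fin n) => P i ω) ℙ = Measure.pi νP :=
    map_pi_of_iIndepFun P hPmeas hPindep
  have hpair : Measure.map (fun ω => ((fun k => P k ω), (fun k => X k ω))) ℙ
      = (Measure.pi νP).prod (Measure.pi (fun _ : Fin n => (volume : Measure Torus))) := by
    have h := (indepFun_iff_map_prod_eq_prod_map_map hPvecMeas.aemeasurable
      hXvecMeas.aemeasurable).mp hPXindep
    rw [h, hlawP, hlawX]
  set RP : (Fin n → ℝ) → (ι' → ℝ) := fun p k => p k.1 with hRP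
  set T : (Fin n → Torus) → (ι' → Torus) := fun x k => x k.1 - x j with hT
  have hRPmeas : Measurable RP := measurable_pi_lambda _ fun k => measurable_pi_apply _
  have hTmeas : Measurable T :=
    measurable_pi_lambda _ fun k => (measurable_pi_apply _).sub (measurable_pi_apply j)
  have hmapRP : Measure.map RP (Measure.pi νP) = Measure.pi (fun k : ι' => νP k.1) := by
    have he := measurePreserving_piEquivPiSubtypeProd νP (fun k : Fin n => k ≠ j)
    have hfst : Measure.map Prod.fst
        ((Measure.pi (fun k : ι' => νP k.1)).prod
          (Measure.pi (fun k : {k : Fin n // ¬ k ≠ j} => νP k.1)))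
        = Measure.pi (fun k : ι' => νP k.1) := by
      rw [Measure.map_fst_prod, measure_univ, one_smul]
    have hcomp : RP = Prod.fst ∘ (MeasurableEquiv.piEquivPiSubtypeProd
        (fun _ : Fin n => ℝ) (fun k => k ≠ j)) := rfl
    rw [hcomp, ← Measure.map_map measurable_fst (MeasurableEquiv.measurable _), he.map_eq, hfst]
  have hmapT : Measure.map T (Measure.pi (fun _ : Fin n => (volume : Measure Torus)))
      = Measure.pi (fun _ : ι' => (volume : Measure Torus)) := by
    set F : (ι' → Torus) × ({k : Fin n // ¬ k ≠ j} → Torus) → (ι' → Torus) :=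
      fun q k => q.1 k - q.2 ⟨j, by simp⟩ with hF
    have hFmeas : Measurable F := measurable_pi_lambda _ fun k =>
      ((measurable_pi_apply _).comp measurable_fst).sub
        ((measurable_pi_apply _).comp measurable_snd)
    have hcomp : T = F ∘ (MeasurableEquiv.piEquivPiSubtypeProd
        (fun _ : Fin n => Torus) (fun k => k ≠ j)) := rfl
    have he := measurePreserving_piEquivPiSubtypeProd
      (fun _ : Fin n => (volume : Measure Torus)) (fun k : Fin n => k ≠ j)
    rw [hcomp, ← Measure.map_map hFmeas (MeasurableEquiv.measurable _), he.map_eq]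
    refine map_prod_of_fiberwise _ _ _ F hFmeas ?_
    intro c
    exact (measurePreserving_pi _ _
      (fun k : ι' => measurePreserving_sub_right (volume : Measure Torus)
        (c ⟨j, by simp⟩))).map_eq
  set Z2 := (MeasurableEquiv.arrowProdEquivProdArrow ℝ Torus ι').symm with hZ2
  have hzip := (measurePreserving_arrowProdEquivProdArrow ℝ Torus ι'
    (fun k : ι' => νP k.1) (fun _ : ι' => (volume : Measure Torus))).symm
  have hGfact : (fun ω (k : ι') => (P k.1 ω, X k.1 ω - X j ω))
      = (Z2 ∘ Prod.map RP T) ∘ (fun ω => ((fun k => P k ω), (fun k => X k ω))) := rfl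
  refine iIndepFun_of_map_pi _
    (fun k => (hPmeas k.1).prodMk ((hXmeas k.1).sub (hXmeas j)))
    (fun k : ι' => (νP k.1).prod (volume : Measure Torus)) ?_
  rw [hGfact, ← Measure.map_map (Z2.measurable.comp (hRPmeas.prodMap hTmeas))
      (hPvecMeas.prodMk hXvecMeas),
    hpair, ← Measure.map_map Z2.measurable (hRPmeas.prodMap hTmeas),
    ← Measure.map_prod_map _ _ hRPmeas hTmeas, hmapRP, hmapT, hzip.map_eq]

end Indep

/-- simultaneous concentration of all interference sums `I(j)`. -/
theorem interference_simultaneous_concentration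
    {Ω : Type*} [MeasureSpace Ω] [IsProbabilityMeasure (ℙ : Measure Ω)]
    (n : ℕ) (hn : 2 ≤ n)
    (X : Fin n → Ω → Torus)
    (hXmeas : ∀ j, Measurable (X j))
    (hXindep : iIndepFun X ℙ)
    (hXunif : ∀ j, Measure.map (X j) ℙ = (volume : Measure Torus))
    (L : ℝ → ℝ) (hLmeas : Measurable L)
    (hL01 : ∀ x, L x ∈ Set.Icc (0 : ℝ) 1)
    (EL : ℝ) (hELpos : 0 < EL)
    (hEL : ∀ j k : Fin n, j ≠ k → ∫ ω, L (dist (X k ω) (X j ω)) ∂ℙ = EL)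
    (P : Fin n → Ω → ℝ) (hPmeas : ∀ k, Measurable (P k))
    (pmin pmax : ℝ) (hpmin : 0 < pmin) (hpminmax : pmin ≤ pmax) (hpmax : pmax ≤ 1)
    (hPrange : ∀ k ω, P k ω ∈ Set.Icc pmin pmax)
    (hPindep : iIndepFun P ℙ)
    (hPid : ∀ k k' : Fin n, Measure.map (P k) ℙ = Measure.map (P k') ℙ)
    (hPXindep : IndepFun (fun ω => fun k => P k ω) (fun ω => fun k => X k ω) ℙ)
    (EP : ℝ) (hEP : ∀ k, ∫ ω, P k ω ∂ℙ = EP)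
    (ε₂ ε₂' : ℝ)
    (hε₂ : ε₂ = Real.sqrt (4 * Real.log n / (((n : ℝ) - 1) * EP * EL)))
    (hε₂' : ε₂' = Real.sqrt (6 * Real.log n / (((n : ℝ) - 1) * EP * EL)))
    (hε₂le : ε₂ ≤ 1) (hε₂'le : ε₂' ≤ 1) :
    1 - 2 / (n : ENNReal)
      ≤ ℙ {ω | ∀ j : Fin n,
            (1 - ε₂) * (((n : ℝ) - 1) * EP * EL)
              ≤ ∑ k ∈ Finset.univ.erase j, P k ω * L (dist (X k ω) (X j ω)) ∧
            ∑ k ∈ Finset.univ.erase j, P k ω * L (dist (X k ω) (X j ω))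
              ≤ (1 + ε₂') * (((n : ℝ) - 1) * EP * EL)} := by
  classical
  have hn2 : (2:ℝ) ≤ (n:ℝ) := by exact_mod_cast hn
  have hnR : (0:ℝ) < (n:ℝ) := by linarith
  have hlogn : 0 ≤ Real.log n := Real.log_nonneg (by linarith)
  -- EP is positive
  have hEPpos : 0 < EP := by
    have k0 : Fin n := ⟨0, by omega⟩
    have hint : Integrable (P k0) ℙ := by
      refine Integrable.mono' (integrable_const pmax) (hPmeas k0).aestronglyMeasurable ?_
      filter_upwards with ω
      rw [Real.norm_eq_abs, abs_le]
      have h := hPrange k0 ω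
      constructor
      · linarith [h.1]
      · exact h.2
    have hge : pmin ≤ ∫ ω, P k0 ω ∂ℙ := by
      have := integral_mono (integrable_const pmin) hint (fun ω => (hPrange k0 ω).1)
      simpa using this
    rw [hEP k0] at hge
    linarith
  set m : ℝ := ((n:ℝ) - 1) * EP * EL with hm_def
  have hmpos : 0 < m := mul_pos (mul_pos (by linarith) hEPpos) hELpos
  have hε₂0 : 0 ≤ ε₂ := hε₂ ▸ Real.sqrt_nonneg _
  have hε₂'0 : 0 ≤ ε₂' := hε₂' ▸ Real.sqrt_nonneg _
  have hε₂sq : ε₂^2 * m = 4 * Real.log n := by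
    rw [hε₂, Real.sq_sqrt (div_nonneg (by linarith) hmpos.le)]
    field_simp
  have hε₂'sq : ε₂'^2 * m = 6 * Real.log n := by
    rw [hε₂', Real.sq_sqrt (div_nonneg (by linarith) hmpos.le)]
    field_simp
  -- the per-node interference sums
  have hSmeas : ∀ j : Fin n, Measurable (fun ω =>
      ∑ k ∈ Finset.univ.erase j, P k ω * L (dist (X k ω) (X j ω))) := fun j =>
    Finset.measurable_sum _ fun k _ => (hPmeas k).mul (hLmeas.comp ((hXmeas k).dist (hXmeas j)))
  -- numeric value of the tail bounds
  have hnum1 : ENNReal.ofReal (Real.exp (-(ε₂^2 * m) / 2))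
      = (n:ENNReal)⁻¹ * (n:ENNReal)⁻¹ := by
    rw [hε₂sq, show -(4 * Real.log n)/2 = (-Real.log n) + (-Real.log n) by ring,
      Real.exp_add, Real.exp_neg, Real.exp_log hnR,
      ENNReal.ofReal_mul (by positivity), ENNReal.ofReal_inv_of_pos hnR,
      ENNReal.ofReal_natCast]
  have hnum2 : ENNReal.ofReal (Real.exp (-(ε₂'^2 * m) / 3))
      = (n:ENNReal)⁻¹ * (n:ENNReal)⁻¹ := by
    rw [hε₂'sq, show -(6 * Real.log n)/3 = (-Real.log n) + (-Real.log n) by ring,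
      Real.exp_add, Real.exp_neg, Real.exp_log hnR,
      ENNReal.ofReal_mul (by positivity), ENNReal.ofReal_inv_of_pos hnR,
      ENNReal.ofReal_natCast]
  -- per-node Chernoff bounds
  have hbound : ∀ j : Fin n,
      ℙ {ω | ∑ k ∈ Finset.univ.erase j, P k ω * L (dist (X k ω) (X j ω)) < (1 - ε₂) * m}
        + ℙ {ω | (1 + ε₂') * m < ∑ k ∈ Finset.univ.erase j, P k ω * L (dist (X k ω) (X j ω))}
      ≤ (n:ENNReal)⁻¹ * (n:ENNReal)⁻¹ + (n:ENNReal)⁻¹ * (n:ENNReal)⁻¹ := by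
    intro j
    set g : {k : Fin n // k ≠ j} → Ω → ℝ :=
      fun k ω => P k.1 ω * L (dist (X k.1 ω) (X j ω)) with hg_def
    have hgmeas : ∀ k, Measurable (g k) := fun k =>
      (hPmeas k.1).mul (hLmeas.comp ((hXmeas k.1).dist (hXmeas j)))
    have hg01 : ∀ k ω, g k ω ∈ Set.Icc (0:ℝ) 1 := by
      intro k ω
      have hP := hPrange k.1 ω
      have hL := hL01 (dist (X k.1 ω) (X j ω))
      constructor
      · exact mul_nonneg (by linarith [hP.1]) hL.1
      · exact mul_le_one₀ (le_trans hP.2 hpmax) hL.1 hL.2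
    have hZindep := interference_terms_indep X hXmeas hXindep hXunif P hPmeas hPindep hPXindep j
    have hgindep : iIndepFun g ℙ := by
      have hh : Measurable (fun q : ℝ × Torus => q.1 * L (dist q.2 0)) :=
        measurable_fst.mul (hLmeas.comp (measurable_snd.dist measurable_const))
      have hcc := hZindep.comp (fun _ => fun q : ℝ × Torus => q.1 * L (dist q.2 0)) (fun _ => hh)
      have hfun : g = fun (k : {k : Fin n // k ≠ j}) =>
          (fun q : ℝ × Torus => q.1 * L (dist q.2 0))
            ∘ (fun ω => (P k.1 ω, X k.1 ω - X j ω)) := by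
        funext k ω
        simp only [hg_def, Function.comp]
        congr 2
        rw [← dist_sub_right (X k.1 ω) (X j ω) (X j ω), sub_self]
      rw [hfun]; exact hcc
    have hgmean : ∀ k : {k : Fin n // k ≠ j}, ∫ ω, g k ω ∂ℙ = EP * EL := by
      intro k
      have hW : Measurable (fun ω => L (dist (X k.1 ω) (X j ω))) :=
        hLmeas.comp ((hXmeas k.1).dist (hXmeas j))
      have hind : IndepFun (P k.1) (fun ω => L (dist (X k.1 ω) (X j ω))) ℙ := by
        have := hPXindep.comp (φ := fun p : Fin n → ℝ => p k.1)
          (ψ := fun x : Fin n → Torus => L (dist (x k.1) (x j)))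
          (measurable_pi_apply k.1 : Measurable fun p : Fin n → ℝ => p k.1)
          (hLmeas.comp ((measurable_pi_apply _).dist (measurable_pi_apply _)))
        exact this
      have hmul := hind.integral_mul_eq_mul_integral (hPmeas k.1).aestronglyMeasurable hW.aestronglyMeasurable
      have : ∫ ω, g k ω ∂ℙ
          = ∫ ω, (P k.1 * fun ω' => L (dist (X k.1 ω') (X j ω'))) ω ∂ℙ := rfl
      rw [this]
      rw [show (P k.1 * fun ω' => L (dist (X k.1 ω') (X j ω')))
          = fun ω => P k.1 ω * L (dist (X k.1 ω) (X j ω)) from rfl] at hmul ⊢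
      rw [hmul, hEP k.1, hEL j k.1 (Ne.symm k.2)]
    have hcard : Fintype.card {k : Fin n // k ≠ j} = n - 1 := by
      have h := Fintype.card_subtype_compl (fun k : Fin n => k = j)
      simp only [Fintype.card_subtype_eq, Fintype.card_fin] at h
      exact h
    have hgsum : ∑ k : {k : Fin n // k ≠ j}, ∫ ω, g k ω ∂ℙ = m := by
      rw [Finset.sum_congr rfl (fun k _ => hgmean k), Finset.sum_const, Finset.card_univ,
        hcard, nsmul_eq_mul, hm_def]
      have : ((n - 1 : ℕ) : ℝ) = (n:ℝ) - 1 := by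
        rw [Nat.cast_sub (by omega)]; norm_num
      rw [this]; ring
    have hsum_eq : ∀ ω, ∑ k ∈ Finset.univ.erase j, P k ω * L (dist (X k ω) (X j ω))
        = ∑ k : {k : Fin n // k ≠ j}, g k ω := by
      intro ω
      refine Finset.sum_subtype _ (fun x => ?_) (fun k => P k ω * L (dist (X k ω) (X j ω)))
      simp [Finset.mem_erase]
    have hlow := chernoff_lower hgindep hgmeas hg01 m hgsum ε₂ hε₂0 hε₂le
    have hhigh := chernoff_upper hgindep hgmeas hg01 m hgsum ε₂' hε₂'0 hε₂'le
    have hlowset : {ω | ∑ k ∈ Finset.univ.erase j, P k ω * L (dist (X k ω) (X j ω))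
          < (1 - ε₂) * m}
        = {ω | ∑ k : {k : Fin n // k ≠ j}, g k ω < (1 - ε₂) * m} := by
      ext ω; simp only [Set.mem_setOf_eq, hsum_eq ω]
    have hhighset : {ω | (1 + ε₂') * m
          < ∑ k ∈ Finset.univ.erase j, P k ω * L (dist (X k ω) (X j ω))}
        = {ω | (1 + ε₂') * m < ∑ k : {k : Fin n // k ≠ j}, g k ω} := by
      ext ω; simp only [Set.mem_setOf_eq, hsum_eq ω]
    rw [hlowset, hhighset]
    exact add_le_add (le_trans hlow (le_of_eq hnum1)) (le_trans hhigh (le_of_eq hnum2))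
  -- assemble via a union bound
  set A : Set Ω := {ω | ∀ j : Fin n,
      (1 - ε₂) * m ≤ ∑ k ∈ Finset.univ.erase j, P k ω * L (dist (X k ω) (X j ω)) ∧
      ∑ k ∈ Finset.univ.erase j, P k ω * L (dist (X k ω) (X j ω)) ≤ (1 + ε₂') * m} with hA_def
  have hAeq : A = ⋂ j : Fin n,
      ({ω | (1 - ε₂) * m ≤ ∑ k ∈ Finset.univ.erase j, P k ω * L (dist (X k ω) (X j ω))}
        ∩ {ω | ∑ k ∈ Finset.univ.erase j, P k ω * L (dist (X k ω) (X j ω)) ≤ (1 + ε₂') * m}) := by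
    ext ω
    simp only [hA_def, Set.mem_setOf_eq, Set.mem_iInter, Set.mem_inter_iff]
  have hAmeas : MeasurableSet A := by
    rw [hAeq]
    exact MeasurableSet.iInter fun j =>
      ((measurableSet_le measurable_const (hSmeas j)).inter
        (measurableSet_le (hSmeas j) measurable_const))
  have hsub : Aᶜ ⊆ ⋃ j : Fin n,
      ({ω | ∑ k ∈ Finset.univ.erase j, P k ω * L (dist (X k ω) (X j ω)) < (1 - ε₂) * m}
        ∪ {ω | (1 + ε₂') * m < ∑ k ∈ Finset.univ.erase j, P k ω * L (dist (X k ω) (X j ω))}) := by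
    intro ω hω
    simp only [hA_def, Set.mem_compl_iff, Set.mem_setOf_eq, not_forall] at hω
    obtain ⟨j, hj⟩ := hω
    rw [not_and_or] at hj
    refine Set.mem_iUnion.mpr ⟨j, ?_⟩
    rcases hj with hj | hj
    · exact Or.inl (show _ ∈ {ω | _ < (1 - ε₂) * m} from not_le.mp hj)
    · exact Or.inr (show _ ∈ {ω | (1 + ε₂') * m < _} from not_le.mp hj)
  have hPcompl : ℙ Aᶜ ≤ 2 / (n:ENNReal) := by
    refine le_trans (measure_mono hsub) (le_trans (measure_iUnion_fintype_le _ _) ?_)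
    refine le_trans (Finset.sum_le_sum fun j (_ : j ∈ Finset.univ) =>
      le_trans (measure_union_le _ _) (hbound j)) ?_
    rw [Finset.sum_const, Finset.card_univ, Fintype.card_fin, nsmul_eq_mul]
    have hne : (n:ENNReal) ≠ 0 := Nat.cast_ne_zero.mpr (by omega)
    have htop : (n:ENNReal) ≠ ⊤ := ENNReal.natCast_ne_top n
    have heq : (n:ENNReal) * ((n:ENNReal)⁻¹ * (n:ENNReal)⁻¹ + (n:ENNReal)⁻¹ * (n:ENNReal)⁻¹)
        = 2 / (n:ENNReal) := by
      calc (n:ENNReal) * ((n:ENNReal)⁻¹ * (n:ENNReal)⁻¹ + (n:ENNReal)⁻¹ * (n:ENNReal)⁻¹)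
          = 2 * ((n:ENNReal) * (n:ENNReal)⁻¹) * (n:ENNReal)⁻¹ := by ring
        _ = 2 * (n:ENNReal)⁻¹ := by rw [ENNReal.mul_inv_cancel hne htop, mul_one]
        _ = 2 / (n:ENNReal) := by rw [div_eq_mul_inv]
    exact le_of_eq heq
  have hkey := prob_compl_eq_one_sub (μ := ℙ) hAmeas.compl
  rw [compl_compl] at hkey
  calc 1 - 2/(n:ENNReal) ≤ 1 - ℙ Aᶜ := tsub_le_tsub_left hPcompl 1
    _ = ℙ A := hkey.symm
end

section
/- With probability at least 1 − 2/n, simultaneously for every ordered pair of distinct nodes (i,j) one has C′_{ij} ≤ C_{ij} ≤ C″_{ij}; consequently, with probability at least 1 − 2/n, every s-t-cut capacity satisfies C′_k ≤ C_k ≤ C″_k simultaneously for all cuts. (Here the hypothesis ε₁ ≤ 1 and ε₁′ ≤ 1 is assumed.) -/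
open MeasureTheory ProbabilityTheory Real

/-- The capacity of the `s`-`t`-cut determined by the set `V` of relays:
`C_k = Σ_{u_i ∉ V} C_{s u_i} + Σ_{u_j ∈ V} Σ_{u_i ∉ V} C_{u_j u_i} + Σ_{u_j ∈ V} C_{u_j t}`. -/
noncomputable def cutCap {Ω : Type*} {n m : ℕ} (C : Fin n → Fin n → Ω → ℝ)
    (s t : Fin n) (u : Fin m → Fin n) (V : Finset (Fin m)) (ω : Ω) : ℝ :=
  ∑ i ∈ Vᶜ, C s (u i) ω + ∑ j ∈ V, ∑ i ∈ Vᶜ, C (u j) (u i) ω + ∑ j ∈ V, C (u j) t ω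

instance : IsProbabilityMeasure (volume : Measure (AddCircle (1:ℝ))) :=
  ⟨by rw [AddCircle.measure_univ]; norm_num⟩
instance inst_s6 : IsProbabilityMeasure (volume : Measure Torus) := by
  rw [Measure.volume_eq_prod]; infer_instance
instance : Measure.IsAddLeftInvariant (volume : Measure Torus) := by
  rw [Measure.volume_eq_prod]; infer_instance

lemma transl_inv (g : ℝ → ℝ) (c : Torus) :
    ∫ y : Torus, g (dist y c) = ∫ y : Torus, g ‖y‖ := by
  have h := (measurePreserving_add_right (volume : Measure Torus) c).integral_comp
    (MeasurableEquiv.addRight c).measurableEmbedding (fun y => g (dist y c))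
  rw [← h]
  congr 1; ext y
  simp [MeasurableEquiv.addRight, dist_eq_norm]

lemma joint_law {Ω : Type*} [MeasureSpace Ω] [IsProbabilityMeasure (ℙ : Measure Ω)]
    {n : ℕ} (X : Fin n → Ω → Torus) (hXmeas : ∀ j, Measurable (X j))
    (hXindep : iIndepFun X ℙ)
    (hXunif : ∀ j, Measure.map (X j) ℙ = (volume : Measure Torus)) :
    Measure.map (fun ω i => X i ω) ℙ = Measure.pi (fun _ => (volume : Measure Torus)) := by
  refine (Measure.pi_eq fun s hs => ?_).symm
  rw [Measure.map_apply (measurable_pi_lambda _ fun i => hXmeas i) (MeasurableSet.univ_pi hs)]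
  have : (fun ω i => X i ω) ⁻¹' (Set.pi Set.univ s) = ⋂ i, X i ⁻¹' s i := by
    ext ω; simp [Set.mem_pi]
  rw [this, hXindep.meas_iInter (fun i => ⟨s i, hs i, rfl⟩)]
  congr 1; ext i
  rw [← hXunif i, Measure.map_apply (hXmeas i) (hs i)]

lemma prod_factor {Ω : Type*} [MeasureSpace Ω] [IsProbabilityMeasure (ℙ : Measure Ω)]
    {N : ℕ} (X : Fin (N+1) → Ω → Torus) (hXmeas : ∀ j, Measurable (X j))
    (hXindep : iIndepFun X ℙ)
    (hXunif : ∀ j, Measure.map (X j) ℙ = (volume : Measure Torus))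
    (j : Fin (N+1)) (f : Torus → Torus → ℝ)
    (hf : Measurable fun p : Torus × Torus => f p.1 p.2)
    (M : ℝ) (hfpos : ∀ y c, 0 < f y c) (hfle : ∀ y c, f y c ≤ M)
    (B : ℝ) (hB : ∀ c, ∫ y : Torus, f y c = B) :
    ∫ ω, ∏ k ∈ Finset.univ.erase j, f (X k ω) (X j ω) ∂ℙ = B ^ N := by
  have hM0 : 0 < M := lt_of_lt_of_le (hfpos 0 0) (hfle 0 0)
  set F : (Fin (N+1) → Torus) → ℝ := fun x => ∏ k ∈ Finset.univ.erase j, f (x k) (x j) with hF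
  have hFmeas : Measurable F :=
    Finset.measurable_prod _ fun k _ => by
      have h1 : Measurable fun x : Fin (N+1) → Torus => ((x k, x j) : Torus × Torus) :=
        (measurable_pi_apply k).prodMk (measurable_pi_apply j)
      exact hf.comp h1
  have h1 : ∫ ω, ∏ k ∈ Finset.univ.erase j, f (X k ω) (X j ω) ∂ℙ
      = ∫ x, F x ∂(Measure.pi fun _ => (volume : Measure Torus)) := by
    rw [← joint_law X hXmeas hXindep hXunif,
      integral_map (measurable_pi_lambda _ fun i => hXmeas i).aemeasurable
        hFmeas.aestronglyMeasurable]
  rw [h1]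
  -- split off coordinate j
  have hmp := (measurePreserving_piFinSuccAbove (fun _ : Fin (N+1) => (volume : Measure Torus)) j).symm
  rw [← hmp.integral_comp (MeasurableEquiv.piFinSuccAbove (fun _ => Torus) j).symm.measurableEmbedding F]
  have hFsymm : ∀ p : Torus × (Fin N → Torus),
      F ((MeasurableEquiv.piFinSuccAbove (fun _ => Torus) j).symm p)
        = ∏ i : Fin N, f (p.2 i) p.1 := by
    rintro ⟨c, y⟩
    have hins : (MeasurableEquiv.piFinSuccAbove (fun _ => Torus) j).symm (c, y)
        = j.insertNth c y := rfl
    rw [hins, hF]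
    simp only [Fin.insertNth_apply_same]
    have himg : Finset.univ.erase j = Finset.image j.succAbove Finset.univ := by
      ext k
      simp only [Finset.mem_erase, Finset.mem_univ, and_true, Finset.mem_image, true_and]
      constructor
      · intro hk
        obtain ⟨i, hi⟩ := Fin.exists_succAbove_eq hk
        exact ⟨i, hi⟩
      · rintro ⟨i, rfl⟩
        exact Fin.succAbove_ne j i
    rw [himg, Finset.prod_image (fun a _ b _ h => Fin.succAbove_right_injective h)]
    apply Finset.prod_congr rfl
    intro i _
    rw [Fin.insertNth_apply_succAbove]
  simp_rw [hFsymm]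
  have hint : Integrable (fun p : Torus × (Fin N → Torus) => ∏ i : Fin N, f (p.2 i) p.1)
      ((volume : Measure Torus).prod (Measure.pi fun _ => (volume : Measure Torus))) := by
    have hmeas : Measurable fun p : Torus × (Fin N → Torus) => ∏ i : Fin N, f (p.2 i) p.1 :=
      Finset.measurable_prod _ fun i _ => by
        have h1 : Measurable fun p : Torus × (Fin N → Torus) => ((p.2 i, p.1) : Torus × Torus) :=
          ((measurable_pi_apply i).comp measurable_snd).prodMk measurable_fst
        exact hf.comp h1
    refine (integrable_const (M ^ N)).mono' hmeas.aestronglyMeasurable ?_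
    refine Filter.Eventually.of_forall fun p => ?_
    rw [Real.norm_eq_abs, abs_of_nonneg (Finset.prod_nonneg fun i _ => (hfpos _ _).le)]
    calc ∏ i : Fin N, f (p.2 i) p.1 ≤ ∏ _i : Fin N, M :=
          Finset.prod_le_prod (fun i _ => (hfpos _ _).le) (fun i _ => hfle _ _)
      _ = M ^ N := by simp
  rw [integral_prod _ hint]
  have hinner : ∀ c : Torus, ∫ y : Fin N → Torus, ∏ i, f (y i) c
      ∂(Measure.pi fun _ => (volume : Measure Torus)) = B ^ N := by
    intro c
    have := MeasureTheory.integral_fintype_prod_eq_pow (ι := Fin N) (μ := (volume : Measure Torus)) (fun z : Torus => f z c)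
    rw [← hB c]
    simpa [volume_pi, Fintype.card_fin] using this
  simp_rw [hinner]
  simp

lemma pair_integral {Ω : Type*} [MeasureSpace Ω] [IsProbabilityMeasure (ℙ : Measure Ω)]
    {n : ℕ} (X : Fin n → Ω → Torus) (hXmeas : ∀ j, Measurable (X j))
    (hXindep : iIndepFun X ℙ)
    (hXunif : ∀ j, Measure.map (X j) ℙ = (volume : Measure Torus))
    (j k : Fin n) (hjk : j ≠ k) (g : ℝ → ℝ) (hg : Measurable g)
    (M : ℝ) (hgb : ∀ r, |g r| ≤ M) :
    ∫ ω, g (dist (X k ω) (X j ω)) ∂ℙ = ∫ y : Torus, g ‖y‖ := by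
  have hind : IndepFun (X k) (X j) ℙ := hXindep.indepFun (Ne.symm hjk)
  have hmap : Measure.map (fun ω => (X k ω, X j ω)) ℙ
      = (volume : Measure Torus).prod (volume : Measure Torus) := by
    rw [(indepFun_iff_map_prod_eq_prod_map_map (hXmeas k).aemeasurable
      (hXmeas j).aemeasurable).mp hind, hXunif k, hXunif j]
  have hmeas : Measurable fun p : Torus × Torus => g (dist p.1 p.2) :=
    hg.comp measurable_dist
  have h1 : ∫ ω, g (dist (X k ω) (X j ω)) ∂ℙ
      = ∫ p : Torus × Torus, g (dist p.1 p.2)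
          ∂((volume : Measure Torus).prod (volume : Measure Torus)) := by
    rw [← hmap, integral_map ((hXmeas k).prodMk (hXmeas j)).aemeasurable
      hmeas.aestronglyMeasurable]
  rw [h1]
  have hint : Integrable (fun p : Torus × Torus => g (dist p.1 p.2))
      ((volume : Measure Torus).prod (volume : Measure Torus)) := by
    refine (integrable_const M).mono' hmeas.aestronglyMeasurable ?_
    exact Filter.Eventually.of_forall fun p => hgb _
  rw [integral_prod _ hint]
  have : ∀ x : Torus, ∫ y : Torus, g (dist x y) = ∫ y : Torus, g ‖y‖ := by
    intro x
    rw [← transl_inv g x]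
    simp_rw [dist_comm]
  simp_rw [this]
  simp

lemma exp_conv_bound {t l : ℝ} (h0 : 0 ≤ l) (h1 : l ≤ 1) :
    exp (t * l) ≤ 1 + (exp t - 1) * l := by
  have := convexOn_exp.2 (Set.mem_univ (0:ℝ)) (Set.mem_univ t)
    (by linarith : (0:ℝ) ≤ 1 - l) h0 (by ring)
  simp only [smul_eq_mul, mul_zero, zero_add, exp_zero, mul_one] at this
  calc exp (t * l) = exp ((1-l) * 0 + l * t) := by ring_nf
    _ ≤ (1-l) * 1 + l * exp t := by simpa using this
    _ = 1 + (exp t - 1) * l := by ring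

lemma exp_half_bound {d : ℝ} (h0 : 0 ≤ d) (h1 : d ≤ 1) :
    exp (d/2) - 1 - (d/2) * (1 + d) ≤ -(d^2)/3 := by
  have hx : |d/2| ≤ 1 := by rw [abs_of_nonneg (by linarith)]; linarith
  have hb := Real.exp_bound hx (by norm_num : 0 < 4)
  have hs : ∑ i ∈ Finset.range 4, (d/2)^i / (Nat.factorial i) 
      = 1 + d/2 + d^2/8 + d^3/48 := by
    simp [Finset.sum_range_succ, Nat.factorial]; ring
  rw [hs] at hb
  have habs : |d/2| = d/2 := abs_of_nonneg (by linarith)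
  rw [habs] at hb
  norm_num [Nat.factorial] at hb
  have hb' := abs_le.mp hb
  have hd4 : (d/2)^4 = d^4/16 := by ring
  nlinarith [hb'.2, sq_nonneg d, pow_le_pow_left₀ h0 h1 3, pow_le_pow_left₀ h0 h1 4]

lemma exp_neg_bound {d : ℝ} (h0 : 0 ≤ d) (h1 : d ≤ 1) :
    d * (1 - d) + exp (-d) - 1 ≤ -(d^2)/2 := by
  have hx : |(-d)| ≤ 1 := by rw [abs_neg, abs_of_nonneg h0]; exact h1
  have hb := Real.exp_bound hx (by norm_num : 0 < 4)
  have hs : ∑ i ∈ Finset.range 4, (-d)^i / (Nat.factorial i) 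
      = 1 - d + d^2/2 - d^3/6 := by
    simp [Finset.sum_range_succ, Nat.factorial]; ring
  rw [hs] at hb
  have habs : |(-d)| = d := by rw [abs_neg, abs_of_nonneg h0]
  rw [habs] at hb
  norm_num [Nat.factorial] at hb
  have hb' := abs_le.mp hb
  nlinarith [hb'.2, pow_le_pow_left₀ h0 h1 4, pow_le_pow_left₀ h0 h1 3]

section Main
variable {Ω : Type*} [MeasureSpace Ω] [IsProbabilityMeasure (ℙ : Measure Ω)]

/-- mgf of the interference at node j factorizes. -/
lemma mgf_J {N : ℕ} (X : Fin (N+1) → Ω → Torus) (hXmeas : ∀ j, Measurable (X j))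
    (hXindep : iIndepFun X ℙ)
    (hXunif : ∀ j, Measure.map (X j) ℙ = (volume : Measure Torus))
    (L : ℝ → ℝ) (hLmeas : Measurable L) (hL01 : ∀ x, L x ∈ Set.Icc (0:ℝ) 1)
    (j : Fin (N+1)) (t : ℝ) :
    mgf (fun ω => ∑ k ∈ Finset.univ.erase j, L (dist (X k ω) (X j ω))) ℙ t
      = (∫ y : Torus, exp (t * L ‖y‖)) ^ N := by
  have key := prod_factor X hXmeas hXindep hXunif j
    (fun y c => exp (t * L (dist y c)))
    (by
      have h1 : Measurable fun p : Torus × Torus => L (dist p.1 p.2) :=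
        hLmeas.comp measurable_dist
      exact (measurable_const.mul h1).exp)
    (exp |t|)
    (fun y c => exp_pos _)
    (fun y c => by
      apply exp_le_exp.mpr
      have h := hL01 (dist y c)
      calc t * L (dist y c) ≤ |t * L (dist y c)| := le_abs_self _
        _ = |t| * |L (dist y c)| := abs_mul _ _
        _ ≤ |t| * 1 := by
            apply mul_le_mul_of_nonneg_left _ (abs_nonneg t)
            rw [abs_of_nonneg h.1]; exact h.2
        _ = |t| := mul_one _)
    (∫ y : Torus, exp (t * L ‖y‖))
    (fun c => transl_inv (fun r => exp (t * L r)) c)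
  rw [← key]
  unfold mgf
  congr 1; ext ω
  simp only
  rw [Finset.mul_sum, exp_sum]

lemma meas_J {N : ℕ} (X : Fin (N+1) → Ω → Torus) (hXmeas : ∀ j, Measurable (X j))
    (L : ℝ → ℝ) (hLmeas : Measurable L) (j : Fin (N+1)) :
    Measurable fun ω => ∑ k ∈ Finset.univ.erase j, L (dist (X k ω) (X j ω)) :=
  Finset.measurable_sum _ fun k _ =>
    hLmeas.comp (measurable_dist.comp ((hXmeas k).prodMk (hXmeas j)))

set_option maxHeartbeats 1000000 in
theorem coupled_capacity_sandwich_aux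
    (n : ℕ) (hn : 2 ≤ n)
    (X : Fin n → Ω → Torus)
    (hXmeas : ∀ j, Measurable (X j))
    (hXindep : iIndepFun X ℙ)
    (hXunif : ∀ j, Measure.map (X j) ℙ = (volume : Measure Torus))
    (L : ℝ → ℝ) (hLmeas : Measurable L)
    (hL01 : ∀ x, L x ∈ Set.Icc (0 : ℝ) 1)
    (EL : ℝ) (hELpos : 0 < EL)
    (hEL : ∀ j k : Fin n, j ≠ k → ∫ ω, L (dist (X k ω) (X j ω)) ∂ℙ = EL)
    (ε₁ ε₁' : ℝ)
    (hε₁ : ε₁ = Real.sqrt (4 * Real.log n / (((n : ℝ) - 1) * EL)))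
    (hε₁' : ε₁' = Real.sqrt (6 * Real.log n / (((n : ℝ) - 1) * EL)))
    (hε₁le : ε₁ ≤ 1) (hε₁'le : ε₁' ≤ 1) :
    1 - 2 / (n : ENNReal)
      ≤ ℙ {ω | ∀ j : Fin n,
          (1 - ε₁) * (((n : ℝ) - 1) * EL)
              ≤ ∑ k ∈ Finset.univ.erase j, L (dist (X k ω) (X j ω)) ∧
          (∑ k ∈ Finset.univ.erase j, L (dist (X k ω) (X j ω)))
              ≤ (1 + ε₁') * (((n : ℝ) - 1) * EL)} := by
  obtain ⟨N, rfl⟩ : ∃ N, n = N + 1 := ⟨n - 1, by omega⟩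
  have hN1 : 1 ≤ N := by omega
  set nn : ℝ := ((N + 1 : ℕ) : ℝ) with hnn
  have hnn1 : (1:ℝ) < nn := by
    rw [hnn]; exact_mod_cast by omega
  have hlogpos : 0 < Real.log nn := Real.log_pos hnn1
  set Jf : Fin (N+1) → Ω → ℝ :=
    fun j ω => ∑ k ∈ Finset.univ.erase j, L (dist (X k ω) (X j ω)) with hJf
  set μR : ℝ := ((((N+1) : ℕ) : ℝ) - 1) * EL with hμR
  have hμRN : μR = (N : ℝ) * EL := by rw [hμR]; push_cast; ring
  have hμRpos : 0 < μR := by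
    rw [hμRN]
    have : (1:ℝ) ≤ (N:ℝ) := by exact_mod_cast hN1
    nlinarith
  -- base integral of L = EL
  have hLbase : ∫ y : Torus, L ‖y‖ = EL := by
    have h01 : (⟨0, by omega⟩ : Fin (N+1)) ≠ ⟨1, by omega⟩ := by
      intro h; simpa using congrArg Fin.val h
    rw [← hEL ⟨0, by omega⟩ ⟨1, by omega⟩ h01]
    exact (pair_integral X hXmeas hXindep hXunif _ _ h01 L hLmeas 1
      (fun r => abs_le.mpr ⟨by linarith [(hL01 r).1], (hL01 r).2⟩)).symm
  -- the base mgf integral and its bound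
  have hLnormmeas : Measurable fun y : Torus => L ‖y‖ :=
    hLmeas.comp measurable_norm
  have hBle : ∀ t : ℝ, (∫ y : Torus, exp (t * L ‖y‖)) ≤ exp ((exp t - 1) * EL) := by
    intro t
    have hintL : Integrable (fun y : Torus => L ‖y‖) := by
      refine (integrable_const 1).mono' hLnormmeas.aestronglyMeasurable ?_
      exact Filter.Eventually.of_forall fun y =>
        abs_le.mpr ⟨by linarith [(hL01 ‖y‖).1], (hL01 ‖y‖).2⟩
    have hintE : Integrable (fun y : Torus => exp (t * L ‖y‖)) := by
      refine (integrable_const (exp |t|)).mono'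
        ((measurable_const.mul hLnormmeas).exp).aestronglyMeasurable ?_
      refine Filter.Eventually.of_forall fun y => ?_
      rw [Real.norm_eq_abs, abs_of_nonneg (exp_pos _).le, exp_le_exp]
      have h := hL01 ‖y‖
      calc t * L ‖y‖ ≤ |t * L ‖y‖| := le_abs_self _
        _ = |t| * |L ‖y‖| := abs_mul _ _
        _ ≤ |t| * 1 := by
            apply mul_le_mul_of_nonneg_left _ (abs_nonneg t)
            rw [abs_of_nonneg h.1]; exact h.2
        _ = |t| := mul_one _
    calc (∫ y : Torus, exp (t * L ‖y‖))
        ≤ ∫ y : Torus, (1 + (exp t - 1) * L ‖y‖) := by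
          apply integral_mono hintE (by exact (integrable_const 1).add (hintL.const_mul _))
          intro y
          exact exp_conv_bound (hL01 ‖y‖).1 (hL01 ‖y‖).2
      _ = 1 + (exp t - 1) * EL := by
          rw [integral_add (integrable_const 1) (hintL.const_mul _), integral_const,
            integral_const_mul, hLbase]
          simp
      _ ≤ exp ((exp t - 1) * EL) := by linarith [Real.add_one_le_exp ((exp t - 1) * EL)]
  have hBnonneg : ∀ t : ℝ, 0 ≤ ∫ y : Torus, exp (t * L ‖y‖) :=
    fun t => integral_nonneg fun y => (exp_pos _).le
  have hmgfle : ∀ (j : Fin (N+1)) (t : ℝ),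
      mgf (Jf j) ℙ t ≤ exp ((exp t - 1) * μR) := by
    intro j t
    rw [hJf, mgf_J X hXmeas hXindep hXunif L hLmeas hL01 j t]
    calc (∫ y : Torus, exp (t * L ‖y‖)) ^ N ≤ (exp ((exp t - 1) * EL)) ^ N :=
          pow_le_pow_left₀ (hBnonneg t) (hBle t) N
      _ = exp ((exp t - 1) * μR) := by
          rw [← Real.exp_nat_mul, hμRN]; ring_nf
  -- integrability of exp(t * J)
  have hJmeas : ∀ j, Measurable (Jf j) := fun j => meas_J X hXmeas L hLmeas j
  have hJbound : ∀ j ω, |Jf j ω| ≤ (N+1 : ℝ) := by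
    intro j ω
    rw [hJf, abs_of_nonneg (Finset.sum_nonneg fun k _ => (hL01 _).1)]
    calc (∑ k ∈ Finset.univ.erase j, L (dist (X k ω) (X j ω)))
        ≤ ∑ k ∈ Finset.univ.erase j, 1 := Finset.sum_le_sum fun k _ => (hL01 _).2
      _ ≤ (N+1 : ℝ) := by
          rw [Finset.sum_const, nsmul_eq_mul, mul_one]
          have := Finset.card_erase_le (s := (Finset.univ : Finset (Fin (N+1)))) (a := j)
          simp only [Finset.card_univ, Fintype.card_fin] at this
          exact_mod_cast le_trans this (by omega)
  have hintJ : ∀ (j : Fin (N+1)) (t : ℝ), Integrable (fun ω => exp (t * Jf j ω)) ℙ := by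
    intro j t
    refine (integrable_const (exp (|t| * (N+1 : ℝ)))).mono'
      ((measurable_const.mul (hJmeas j)).exp).aestronglyMeasurable ?_
    refine Filter.Eventually.of_forall fun ω => ?_
    rw [Real.norm_eq_abs, abs_of_nonneg (exp_pos _).le, exp_le_exp]
    calc t * Jf j ω ≤ |t * Jf j ω| := le_abs_self _
      _ = |t| * |Jf j ω| := abs_mul _ _
      _ ≤ |t| * (N+1 : ℝ) := mul_le_mul_of_nonneg_left (hJbound j ω) (abs_nonneg t)
  -- epsilon facts
  have hε₁nonneg : 0 ≤ ε₁ := hε₁ ▸ Real.sqrt_nonneg _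
  have hε₁'nonneg : 0 ≤ ε₁' := hε₁' ▸ Real.sqrt_nonneg _
  have hε₁sq : ε₁ ^ 2 * μR = 4 * Real.log nn := by
    rw [hε₁, Real.sq_sqrt (by positivity)]
    field_simp
  have hε₁'sq : ε₁' ^ 2 * μR = 6 * Real.log nn := by
    rw [hε₁', Real.sq_sqrt (by positivity)]
    field_simp
  have hexp2log : exp (-(2 * Real.log nn)) = (nn ^ 2)⁻¹ := by
    rw [Real.exp_neg, two_mul, Real.exp_add, Real.exp_log (by linarith), sq]
  -- upper tail
  have hup : ∀ j : Fin (N+1),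
      ℙ {ω | (1 + ε₁') * μR ≤ Jf j ω} ≤ ENNReal.ofReal ((nn ^ 2)⁻¹) := by
    intro j
    have ht : (0:ℝ) ≤ ε₁' / 2 := by linarith
    have hch := measure_ge_le_exp_mul_mgf (μ := ℙ) (X := Jf j) (t := ε₁'/2)
      ((1 + ε₁') * μR) ht (hintJ j _)
    have hchain : exp (-(ε₁'/2) * ((1 + ε₁') * μR)) * mgf (Jf j) ℙ (ε₁'/2)
        ≤ (nn ^ 2)⁻¹ := by
      calc exp (-(ε₁'/2) * ((1 + ε₁') * μR)) * mgf (Jf j) ℙ (ε₁'/2)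
          ≤ exp (-(ε₁'/2) * ((1 + ε₁') * μR)) * exp ((exp (ε₁'/2) - 1) * μR) := by
            apply mul_le_mul_of_nonneg_left (hmgfle j _) (exp_pos _).le
        _ = exp ((exp (ε₁'/2) - 1 - (ε₁'/2) * (1 + ε₁')) * μR) := by
            rw [← Real.exp_add]; ring_nf
        _ ≤ exp (-(ε₁'^2)/3 * μR) := by
            apply exp_le_exp.mpr
            apply mul_le_mul_of_nonneg_right (exp_half_bound hε₁'nonneg hε₁'le) hμRpos.le
        _ = exp (-(2 * Real.log nn)) := by
            congr 1
            have : ε₁' ^ 2 * μR = 6 * Real.log nn := hε₁'sq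
            nlinarith [this]
        _ = (nn ^ 2)⁻¹ := hexp2log
    have := le_trans hch hchain
    rw [← ENNReal.ofReal_toReal (measure_ne_top ℙ _)]
    exact ENNReal.ofReal_le_ofReal this
  -- lower tail
  have hlow : ∀ j : Fin (N+1),
      ℙ {ω | Jf j ω ≤ (1 - ε₁) * μR} ≤ ENNReal.ofReal ((nn ^ 2)⁻¹) := by
    intro j
    have ht : -ε₁ ≤ (0:ℝ) := by linarith
    have hch := measure_le_le_exp_mul_mgf (μ := ℙ) (X := Jf j) (t := -ε₁)
      ((1 - ε₁) * μR) ht (hintJ j _)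
    have hchain : exp (-(-ε₁) * ((1 - ε₁) * μR)) * mgf (Jf j) ℙ (-ε₁)
        ≤ (nn ^ 2)⁻¹ := by
      calc exp (-(-ε₁) * ((1 - ε₁) * μR)) * mgf (Jf j) ℙ (-ε₁)
          ≤ exp (ε₁ * ((1 - ε₁) * μR)) * exp ((exp (-ε₁) - 1) * μR) := by
            rw [neg_neg]
            apply mul_le_mul_of_nonneg_left (hmgfle j _) (exp_pos _).le
        _ = exp ((ε₁ * (1 - ε₁) + exp (-ε₁) - 1) * μR) := by
            rw [← Real.exp_add]; ring_nf
        _ ≤ exp (-(ε₁^2)/2 * μR) := by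
            apply exp_le_exp.mpr
            apply mul_le_mul_of_nonneg_right (exp_neg_bound hε₁nonneg hε₁le) hμRpos.le
        _ = exp (-(2 * Real.log nn)) := by
            congr 1
            nlinarith [hε₁sq]
        _ = (nn ^ 2)⁻¹ := hexp2log
    have := le_trans hch hchain
    rw [← ENNReal.ofReal_toReal (measure_ne_top ℙ _)]
    exact ENNReal.ofReal_le_ofReal this
  -- the good event
  set E : Set Ω := {ω | ∀ j : Fin (N+1),
      (1 - ε₁) * μR ≤ Jf j ω ∧ Jf j ω ≤ (1 + ε₁') * μR} with hE
  have hEmeas : MeasurableSet E := by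
    have : E = ⋂ j : Fin (N+1),
        ({ω | (1 - ε₁) * μR ≤ Jf j ω} ∩ {ω | Jf j ω ≤ (1 + ε₁') * μR}) := by
      ext ω; simp [hE, Set.mem_iInter, forall_and]
    rw [this]
    exact MeasurableSet.iInter fun j =>
      (measurableSet_le measurable_const (hJmeas j)).inter
        (measurableSet_le (hJmeas j) measurable_const)
  have hEc : ℙ Eᶜ ≤ 2 / ((N + 1 : ℕ) : ENNReal) := by
    have hsub : Eᶜ ⊆ ⋃ j : Fin (N+1),
        ({ω | (1 + ε₁') * μR ≤ Jf j ω} ∪ {ω | Jf j ω ≤ (1 - ε₁) * μR}) := by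
      intro ω hω
      simp only [hE, Set.mem_compl_iff, Set.mem_setOf_eq, not_forall] at hω
      obtain ⟨j, hj⟩ := hω
      rw [not_and_or] at hj
      refine Set.mem_iUnion.mpr ⟨j, ?_⟩
      rcases hj with hj | hj
      · exact Or.inr (Set.mem_setOf_eq ▸ le_of_not_ge hj)
      · exact Or.inl (Set.mem_setOf_eq ▸ le_of_not_ge hj)
    set q : ENNReal := ENNReal.ofReal ((nn ^ 2)⁻¹) with hq
    have hstep : ℙ Eᶜ ≤ ((N + 1 : ℕ) : ENNReal) * (q + q) := by
      calc ℙ Eᶜ ≤ ∑' j : Fin (N+1),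
            ℙ ({ω | (1 + ε₁') * μR ≤ Jf j ω} ∪ {ω | Jf j ω ≤ (1 - ε₁) * μR}) :=
            le_trans (measure_mono hsub) (measure_iUnion_le _)
        _ = ∑ j : Fin (N+1),
            ℙ ({ω | (1 + ε₁') * μR ≤ Jf j ω} ∪ {ω | Jf j ω ≤ (1 - ε₁) * μR}) :=
            tsum_fintype _
        _ ≤ ∑ _j : Fin (N+1), (q + q) := by
            apply Finset.sum_le_sum
            intro j _
            exact le_trans (measure_union_le _ _) (add_le_add (hup j) (hlow j))
        _ = ((N + 1 : ℕ) : ENNReal) * (q + q) := by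
            rw [Finset.sum_const, Finset.card_univ, Fintype.card_fin, nsmul_eq_mul]
    refine le_trans hstep ?_
    have hqval : q = (((N + 1 : ℕ) : ENNReal) * ((N + 1 : ℕ) : ENNReal))⁻¹ := by
      rw [hq, hnn]
      rw [show (((N+1 : ℕ) : ℝ)^2)⁻¹ = (((N+1:ℕ) : ℝ) * ((N+1:ℕ) : ℝ))⁻¹ by rw [sq]]
      rw [ENNReal.ofReal_inv_of_pos (by positivity)]
      congr 1
      rw [ENNReal.ofReal_mul (by positivity), ENNReal.ofReal_natCast]
    rw [hqval]
    set e : ENNReal := ((N + 1 : ℕ) : ENNReal) with he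
    have he0 : e ≠ 0 := by simp [he]
    have hetop : e ≠ ⊤ := by simp [he]
    have hinv : (e * e)⁻¹ = e⁻¹ * e⁻¹ := by
      rw [ENNReal.mul_inv (Or.inl he0) (Or.inl hetop)]
    rw [hinv]
    calc e * (e⁻¹ * e⁻¹ + e⁻¹ * e⁻¹) = (e * e⁻¹) * (2 * e⁻¹) := by ring
      _ = 2 * e⁻¹ := by rw [ENNReal.mul_inv_cancel he0 hetop, one_mul]
      _ = 2 / e := by rw [ENNReal.div_eq_inv_mul, mul_comm]
      _ ≤ 2 / e := le_rfl
  -- conclude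
  have h1 : ℙ Eᶜᶜ = 1 - ℙ Eᶜ := prob_compl_eq_one_sub hEmeas.compl
  rw [compl_compl] at h1
  calc 1 - 2 / (((N+1) : ℕ) : ENNReal) ≤ 1 - ℙ Eᶜ := tsub_le_tsub_left hEc 1
    _ = ℙ E := h1.symm
end Main

/-- with probability at least `1 - 2/n`, simultaneously for all ordered pairs of
distinct nodes `C'_{ij} ≤ C_{ij} ≤ C''_{ij}`, and consequently, with probability at least
`1 - 2/n`, every `s`-`t`-cut capacity satisfies `C'_k ≤ C_k ≤ C''_k` simultaneously. -/
theorem coupled_capacity_sandwich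
    {Ω : Type*} [MeasureSpace Ω] [IsProbabilityMeasure (ℙ : Measure Ω)]
    (n : ℕ) (hn : 2 ≤ n)
    (X : Fin n → Ω → Torus)
    (hXmeas : ∀ j, Measurable (X j))
    (hXindep : iIndepFun X ℙ)
    (hXunif : ∀ j, Measure.map (X j) ℙ = (volume : Measure Torus))
    (L : ℝ → ℝ) (hLmeas : Measurable L)
    (hL01 : ∀ x, L x ∈ Set.Icc (0 : ℝ) 1)
    (EL : ℝ) (hELpos : 0 < EL)
    (hEL : ∀ j k : Fin n, j ≠ k → ∫ ω, L (dist (X k ω) (X j ω)) ∂ℙ = EL)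
    (P₀ N₀ γ β : ℝ) (hP₀ : 0 < P₀) (hN₀ : 0 < N₀) (hγ : 0 < γ) (hβ : 0 < β)
    (ε₁ ε₁' : ℝ)
    (hε₁ : ε₁ = Real.sqrt (4 * Real.log n / (((n : ℝ) - 1) * EL)))
    (hε₁' : ε₁' = Real.sqrt (6 * Real.log n / (((n : ℝ) - 1) * EL)))
    (hε₁le : ε₁ ≤ 1) (hε₁'le : ε₁' ≤ 1)
    (C C' C'' : Fin n → Fin n → Ω → ℝ)
    (hC : ∀ i j ω, C i j ω =
      if β * (N₀ / P₀ + γ * ∑ k ∈ Finset.univ.erase j, L (dist (X k ω) (X j ω)))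
          ≤ (1 + γ * β) * L (dist (X i ω) (X j ω)) then 1 else 0)
    (hC' : ∀ i j ω, C' i j ω =
      if β * (N₀ / P₀ + γ * ((1 + ε₁') * (((n : ℝ) - 1) * EL)))
          ≤ (1 + γ * β) * L (dist (X i ω) (X j ω)) then 1 else 0)
    (hC'' : ∀ i j ω, C'' i j ω =
      if β * (N₀ / P₀ + γ * ((1 - ε₁) * (((n : ℝ) - 1) * EL)))
          ≤ (1 + γ * β) * L (dist (X i ω) (X j ω)) then 1 else 0)
    (m : ℕ) (s t : Fin n) (u : Fin m → Fin n)
    (hu : Function.Injective u) (hus : ∀ i, u i ≠ s) (hut : ∀ i, u i ≠ t) (hst : s ≠ t) :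
    1 - 2 / (n : ENNReal)
      ≤ ℙ {ω | ∀ i j : Fin n, i ≠ j → C' i j ω ≤ C i j ω ∧ C i j ω ≤ C'' i j ω} ∧
    1 - 2 / (n : ENNReal)
      ≤ ℙ {ω | ∀ V : Finset (Fin m),
            cutCap C' s t u V ω ≤ cutCap C s t u V ω ∧
            cutCap C s t u V ω ≤ cutCap C'' s t u V ω} := by
  have hkey := coupled_capacity_sandwich_aux n hn X hXmeas hXindep hXunif L hLmeas hL01
    EL hELpos hEL ε₁ ε₁' hε₁ hε₁' hε₁le hε₁'le
  set E : Set Ω := {ω | ∀ j : Fin n,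
      (1 - ε₁) * (((n : ℝ) - 1) * EL)
          ≤ ∑ k ∈ Finset.univ.erase j, L (dist (X k ω) (X j ω)) ∧
      (∑ k ∈ Finset.univ.erase j, L (dist (X k ω) (X j ω)))
          ≤ (1 + ε₁') * (((n : ℝ) - 1) * EL)} with hEdef
  have hpt : ∀ ω ∈ E, ∀ i j : Fin n, C' i j ω ≤ C i j ω ∧ C i j ω ≤ C'' i j ω := by
    intro ω hω i j
    have hJ := hω j
    constructor
    · rw [hC' i j ω, hC i j ω]
      split_ifs with h1 h2
      · exact le_refl _
      · exfalso
        apply h2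
        refine le_trans ?_ h1
        have := hJ.2
        nlinarith [mul_nonneg (mul_nonneg hβ.le hγ.le) (sub_nonneg.mpr hJ.2)]
      · norm_num
      · exact le_refl _
    · rw [hC'' i j ω, hC i j ω]
      split_ifs with h1 h2
      · exact le_refl _
      · exfalso
        apply h2
        refine le_trans ?_ h1
        nlinarith [mul_nonneg (mul_nonneg hβ.le hγ.le) (sub_nonneg.mpr hJ.1)]
      · norm_num
      · exact le_refl _
  constructor
  · refine le_trans hkey (measure_mono ?_)
    intro ω hω
    intro i j _
    exact hpt ω hω i j
  · refine le_trans hkey (measure_mono ?_)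
    intro ω hω V
    have h := hpt ω hω
    constructor
    · unfold cutCap
      refine add_le_add (add_le_add (Finset.sum_le_sum fun i _ => (h _ _).1)
        (Finset.sum_le_sum fun a _ => Finset.sum_le_sum fun b _ => (h _ _).1))
        (Finset.sum_le_sum fun a _ => (h _ _).1)
    · unfold cutCap
      refine add_le_add (add_le_add (Finset.sum_le_sum fun i _ => (h _ _).2)
        (Finset.sum_le_sum fun a _ => Finset.sum_le_sum fun b _ => (h _ _).2))
        (Finset.sum_le_sum fun a _ => (h _ _).2)
end

section
/- Let Y₁, …, Yₙ (n > 1) be random variables, not necessarily independent, each taking values in a countable set, and let S = Y₁ + ⋯ + Yₙ be integrable. Suppose for each i there is a constant cᵢ ≥ 0 such that for every tuple (y₁,…,y_{i−1}) and every pair of values y, y′ with Pr(Y₁=y₁,…,Y_{i−1}=y_{i−1}, Y_i=y) > 0 and Pr(Y₁=y₁,…,Y_{i−1}=y_{i−1}, Y_i=y′) > 0, one has |E[S | Y₁=y₁,…,Y_{i−1}=y_{i−1}, Y_i=y] − E[S | Y₁=y₁,…,Y_{i−1}=y_{i−1}, Y_i=y′]| ≤ cᵢ. Then for every λ > 0,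 Pr( S ≥ E[S] + λ ) ≤ exp( −λ² / (2·Σ_{i=1}^n cᵢ²) ) and Pr( S ≤ E[S] − λ ) ≤ exp( −λ² / (2·Σ_{i=1}^n cᵢ²) ). -/
open MeasureTheory ProbabilityTheory

lemma exp_le_cosh_add {t c z : ℝ} (hc : 0 < c) (hz : |z| ≤ c) :
    Real.exp (t * z) ≤ Real.cosh (t * c) + (z / c) * Real.sinh (t * c) := by
  have hz1 : -c ≤ z := neg_le_of_abs_le hz
  have hz2 : z ≤ c := le_of_abs_le hz
  have ha : (0:ℝ) ≤ (c + z) / (2 * c) := div_nonneg (by linarith) (by linarith)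
  have hb : (0:ℝ) ≤ (c - z) / (2 * c) := div_nonneg (by linarith) (by linarith)
  have hab : (c + z) / (2 * c) + (c - z) / (2 * c) = 1 := by
    field_simp
    ring
  have h := convexOn_exp.2 (Set.mem_univ (t * c)) (Set.mem_univ (-(t * c))) ha hb hab
  simp only [smul_eq_mul] at h
  have hkey : (c + z) / (2 * c) * (t * c) + (c - z) / (2 * c) * (-(t * c)) = t * z := by
    field_simp; ring
  rw [hkey] at h
  refine h.trans (le_of_eq ?_)
  rw [Real.cosh_eq, Real.sinh_eq]
  field_simp
  ring

lemma weighted_hoeffding {ι : Type*} [Countable ι] (p z : ι → ℝ) (c t P : ℝ)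
    (hp : ∀ d, 0 ≤ p d) (hc : 0 ≤ c) (hps : HasSum p P)
    (hzs : HasSum (fun d => p d * z d) 0)
    (hzb : ∀ d, p d ≠ 0 → |z d| ≤ c) :
    Summable (fun d => p d * Real.exp (t * z d)) ∧
      ∑' d, p d * Real.exp (t * z d) ≤ P * Real.exp (t ^ 2 * c ^ 2 / 2) := by
  have hsummable : Summable fun d => p d * Real.exp (t * z d) := by
    refine Summable.of_nonneg_of_le
      (fun d => mul_nonneg (hp d) (Real.exp_pos _).le) (fun d => ?_)
      (hps.summable.mul_right (Real.exp (|t| * c)))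
    by_cases hpd : p d = 0
    · simp [hpd]
    · have : t * z d ≤ |t| * c := by
        calc t * z d ≤ |t * z d| := le_abs_self _
        _ = |t| * |z d| := abs_mul _ _
        _ ≤ |t| * c := by
            exact mul_le_mul_of_nonneg_left (hzb d hpd) (abs_nonneg t)
      exact mul_le_mul_of_nonneg_left (Real.exp_le_exp.2 this) (hp d)
  refine ⟨hsummable, ?_⟩
  rcases eq_or_lt_of_le hc with hc0 | hc0
  · have heq : (fun d => p d * Real.exp (t * z d)) = p := by
      funext d
      by_cases hpd : p d = 0
      · simp [hpd]
      · have : z d = 0 := by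
          have := hzb d hpd; rw [← hc0] at this
          exact abs_eq_zero.1 (le_antisymm this (abs_nonneg _))
        simp [this]
    rw [heq, hps.tsum_eq, ← hc0]
    nlinarith [Real.exp_pos (t ^ 2 * 0 ^ 2 / 2), hps.nonneg hp,
      Real.one_le_exp (by positivity : (0:ℝ) ≤ t ^ 2 * 0 ^ 2 / 2)]
  · have hRHS : HasSum (fun d => p d * Real.cosh (t * c) + p d * z d * (Real.sinh (t * c) / c))
        (P * Real.cosh (t * c) + 0 * (Real.sinh (t * c) / c)) :=
      (hps.mul_right _).add (hzs.mul_right _)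
    have hbound : ∑' d, p d * Real.exp (t * z d)
        ≤ ∑' d, (p d * Real.cosh (t * c) + p d * z d * (Real.sinh (t * c) / c)) := by
      apply Summable.tsum_le_tsum (fun d => ?_) hsummable hRHS.summable
      by_cases hpd : p d = 0
      · simp [hpd]
      · have h1 := exp_le_cosh_add (t := t) hc0 (hzb d hpd)
        have h2 : p d * Real.exp (t * z d)
            ≤ p d * (Real.cosh (t * c) + z d / c * Real.sinh (t * c)) :=
          mul_le_mul_of_nonneg_left h1 (hp d)
        calc p d * Real.exp (t * z d)
            ≤ p d * (Real.cosh (t * c) + z d / c * Real.sinh (t * c)) := h2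
          _ = p d * Real.cosh (t * c) + p d * z d * (Real.sinh (t * c) / c) := by ring
    rw [hRHS.tsum_eq] at hbound
    have hcosh : Real.cosh (t * c) ≤ Real.exp (t ^ 2 * c ^ 2 / 2) := by
      have := Real.cosh_le_exp_half_sq (t * c)
      convert this using 3
      ring
    calc ∑' d, p d * Real.exp (t * z d)
        ≤ P * Real.cosh (t * c) + 0 * (Real.sinh (t * c) / c) := hbound
      _ = P * Real.cosh (t * c) := by ring
      _ ≤ P * Real.exp (t ^ 2 * c ^ 2 / 2) :=
          mul_le_mul_of_nonneg_left hcosh (hps.nonneg hp)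

lemma centered_bound {ι : Type*} [Countable ι] (p w : ι → ℝ) (P m c : ℝ)
    (hp : ∀ d, 0 ≤ p d) (hps : HasSum p P) (hws : HasSum (fun d => p d * w d) (m * P))
    (hP : 0 < P) (hpair : ∀ d d', p d ≠ 0 → p d' ≠ 0 → |w d - w d'| ≤ c) :
    ∀ d, p d ≠ 0 → |w d - m| ≤ c := by
  intro d hd
  have hc : 0 ≤ c := by
    simpa using hpair d d hd hd
  have hsum : HasSum (fun d' => p d' * (w d - w d')) (P * w d - m * P) := by
    have h0 : (fun d' => p d' * w d - p d' * w d') = fun d' => p d' * (w d - w d') := by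
      funext d'; ring
    exact h0 ▸ ((hps.mul_right (w d)).sub hws)
  have hterm : ∀ d', |p d' * (w d - w d')| ≤ p d' * c := by
    intro d'
    by_cases hpd' : p d' = 0
    · simp [hpd', hc]
    · rw [abs_mul, abs_of_nonneg (hp d')]
      exact mul_le_mul_of_nonneg_left (hpair d d' hd hpd') (hp d')
  have hpc : HasSum (fun d' => p d' * c) (P * c) := hps.mul_right c
  have habs : |P * w d - m * P| ≤ P * c := by
    rw [abs_le]
    constructor
    · have : -(P * w d - m * P) ≤ P * c := by
        rw [← hsum.neg.tsum_eq, ← hpc.tsum_eq]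
        exact Summable.tsum_le_tsum (fun d' => (neg_le_abs _).trans (hterm d'))
          hsum.neg.summable hpc.summable
      linarith
    · rw [← hsum.tsum_eq, ← hpc.tsum_eq]
      exact Summable.tsum_le_tsum (fun d' => (le_abs_self _).trans (hterm d'))
        hsum.summable hpc.summable
  have heq : P * w d - m * P = P * (w d - m) := by ring
  rw [heq, abs_mul, abs_of_pos hP] at habs
  exact le_of_mul_le_mul_left habs hP

open ENNReal in
lemma step_lemma {Ω : Type*} [MeasureSpace Ω] [IsProbabilityMeasure (ℙ : Measure Ω)]
    {γ δ : Type*} (E : Ω → γ) (F : Ω → δ) (pr : δ → γ) (hπ : ∀ ω, E ω = pr (F ω))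
    (hEc : (Set.range E).Countable) (hFc : (Set.range F).Countable)
    (hEm : ∀ b, MeasurableSet (E ⁻¹' {b})) (hFm : ∀ d, MeasurableSet (F ⁻¹' {d}))
    (S : Ω → ℝ) (hSint : Integrable S ℙ) (c t : ℝ) (hc : 0 ≤ c)
    (hdiff : ∀ ω ω', E ω = E ω' → ℙ (F ⁻¹' {F ω}) ≠ 0 → ℙ (F ⁻¹' {F ω'}) ≠ 0 →
      |(∫ x in F ⁻¹' {F ω}, S x ∂ℙ) / (ℙ (F ⁻¹' {F ω})).toReal -
       (∫ x in F ⁻¹' {F ω'}, S x ∂ℙ) / (ℙ (F ⁻¹' {F ω'})).toReal| ≤ c) :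
    ∫⁻ ω, ENNReal.ofReal
        (Real.exp (t * ((∫ x in F ⁻¹' {F ω}, S x ∂ℙ) / (ℙ (F ⁻¹' {F ω})).toReal))) ∂ℙ
      ≤ ENNReal.ofReal (Real.exp (t ^ 2 * c ^ 2 / 2)) *
        ∫⁻ ω, ENNReal.ofReal
          (Real.exp (t * ((∫ x in E ⁻¹' {E ω}, S x ∂ℙ) / (ℙ (E ⁻¹' {E ω})).toReal))) ∂ℙ := by
  classical
  set vF : δ → ℝ := fun d => (∫ x in F ⁻¹' {d}, S x ∂ℙ) / (ℙ (F ⁻¹' {d})).toReal with hvF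
  set vE : γ → ℝ := fun b => (∫ x in E ⁻¹' {b}, S x ∂ℙ) / (ℙ (E ⁻¹' {b})).toReal with hvE
  haveI : Countable ↥(Set.range E) := hEc.to_subtype
  -- decompose over fibers of E
  have hcover : ⋃ b : ↥(Set.range E), E ⁻¹' {(b : γ)} = Set.univ := by
    ext ω
    simp only [Set.mem_iUnion, Set.mem_univ, iff_true]
    exact ⟨⟨E ω, Set.mem_range_self ω⟩, rfl⟩
  have hdisjE : Pairwise (Function.onFun Disjoint fun b : ↥(Set.range E) => E ⁻¹' {(b : γ)}) := by
    intro b b' hbb'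
    exact Disjoint.preimage E (Set.disjoint_singleton.2 (Subtype.coe_ne_coe.2 hbb'))
  have hsplit : ∀ f : Ω → ℝ≥0∞,
      ∫⁻ ω, f ω ∂ℙ = ∑' b : ↥(Set.range E), ∫⁻ ω in E ⁻¹' {(b : γ)}, f ω ∂ℙ := by
    intro f
    rw [← setLIntegral_univ, ← hcover, lintegral_iUnion (fun b => hEm _) hdisjE]
  rw [hsplit (fun ω => ENNReal.ofReal (Real.exp (t * vF (F ω)))),
    hsplit (fun ω => ENNReal.ofReal (Real.exp (t * vE (E ω)))), ← ENNReal.tsum_mul_left]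
  apply ENNReal.tsum_le_tsum
  intro b
  -- per-atom inequality
  by_cases hB : ℙ (E ⁻¹' {(b : γ)}) = 0
  · rw [setLIntegral_measure_zero _ _ hB]
    exact zero_le
  set B : Set Ω := E ⁻¹' {(b : γ)} with hBdef
  -- the RHS over B
  have hEconst : ∀ ω ∈ B, ENNReal.ofReal (Real.exp (t * vE (E ω)))
      = ENNReal.ofReal (Real.exp (t * vE (b : γ))) := by
    intro ω hω
    rw [Set.mem_preimage, Set.mem_singleton_iff] at hω
    rw [hω]
  have hRHS : ∫⁻ ω in B, ENNReal.ofReal (Real.exp (t * vE (E ω))) ∂ℙ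
      = ENNReal.ofReal (Real.exp (t * vE (b : γ))) * ℙ B := by
    rw [setLIntegral_congr_fun (hEm _) hEconst,
      setLIntegral_const]
  rw [hRHS]
  -- decompose B into fibers of F
  haveI : Countable ↥(F '' B) := ((hFc.mono (Set.image_subset_range F B)).to_subtype)
  have hsubB : ∀ d : ↥(F '' B), F ⁻¹' {(d : δ)} ⊆ B := by
    rintro ⟨d, ω₀, hω₀B, rfl⟩ ω hω
    rw [Set.mem_preimage, Set.mem_singleton_iff] at hω
    have : E ω = E ω₀ := by rw [hπ ω, hπ ω₀, hω]
    rw [hBdef, Set.mem_preimage, Set.mem_singleton_iff, this]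
    exact hω₀B
  have hBcover : B = ⋃ d : ↥(F '' B), F ⁻¹' {(d : δ)} := by
    apply Set.Subset.antisymm
    · intro ω hω
      exact Set.mem_iUnion.2 ⟨⟨F ω, Set.mem_image_of_mem F hω⟩, rfl⟩
    · exact Set.iUnion_subset hsubB
  have hdisjF : Pairwise (Function.onFun Disjoint fun d : ↥(F '' B) => F ⁻¹' {(d : δ)}) := by
    intro d d' hdd'
    exact Disjoint.preimage F (Set.disjoint_singleton.2 (Subtype.coe_ne_coe.2 hdd'))
  set p : ↥(F '' B) → ℝ := fun d => (ℙ (F ⁻¹' {(d : δ)})).toReal with hpdef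
  set w : ↥(F '' B) → ℝ := fun d => vF (d : δ) with hwdef
  set P : ℝ := (ℙ B).toReal with hPdef
  have hp : ∀ d, 0 ≤ p d := fun d => ENNReal.toReal_nonneg
  have hμsum : ℙ B = ∑' d : ↥(F '' B), ℙ (F ⁻¹' {(d : δ)}) := by
    conv_lhs => rw [hBcover]
    exact measure_iUnion hdisjF (fun d => hFm _)
  have hPsum : HasSum p P := by
    have hsummp : Summable p :=
      ENNReal.summable_toReal (by rw [← hμsum]; exact measure_ne_top _ _)
    refine hsummp.hasSum_iff.2 ?_
    rw [hPdef, hμsum, ENNReal.tsum_toReal_eq (fun d => measure_ne_top _ _)]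
  have hP : 0 < P := ENNReal.toReal_pos hB (measure_ne_top _ _)
  have hintsum : HasSum (fun d : ↥(F '' B) => ∫ x in F ⁻¹' {(d : δ)}, S x ∂ℙ)
      (∫ x in B, S x ∂ℙ) := by
    have := hasSum_integral_iUnion (μ := ℙ) (s := fun d : ↥(F '' B) => F ⁻¹' {(d : δ)})
      (fun d => hFm _) hdisjF (by rw [← hBcover]; exact hSint.integrableOn)
    rwa [← hBcover] at this
  have hμne : ∀ d : ↥(F '' B), p d ≠ 0 → ℙ (F ⁻¹' {(d : δ)}) ≠ 0 := by
    intro d hd h0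
    exact hd (by rw [hpdef]; simp [h0])
  have hpw : ∀ d : ↥(F '' B), ∫ x in F ⁻¹' {(d : δ)}, S x ∂ℙ = p d * w d := by
    intro d
    by_cases h0 : ℙ (F ⁻¹' {(d : δ)}) = 0
    · rw [Measure.restrict_eq_zero.2 h0]
      simp [hpdef, h0]
    · have hpd : p d ≠ 0 := by
        rw [hpdef]
        simp only [ne_eq, ENNReal.toReal_eq_zero_iff, measure_ne_top, or_false]
        exact h0
      rw [hwdef, hvF]
      field_simp
      rw [mul_div_assoc, show p d / (ℙ (F ⁻¹' {(d : δ)})).toReal = 1 from div_self hpd, mul_one]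
  have hwsum : HasSum (fun d => p d * w d) (∫ x in B, S x ∂ℙ) := by
    have h0 : (fun d : ↥(F '' B) => ∫ x in F ⁻¹' {(d : δ)}, S x ∂ℙ) = fun d => p d * w d :=
      funext hpw
    rwa [h0] at hintsum
  have hvEbP : vE (b : γ) * P = ∫ x in B, S x ∂ℙ := by
    rw [hvE]
    field_simp [hPdef, hBdef]
    rw [mul_div_assoc, show P / (ℙ (E ⁻¹' {(b : γ)})).toReal = 1 from div_self hP.ne', mul_one]
  have hpair : ∀ d d', p d ≠ 0 → p d' ≠ 0 → |w d - w d'| ≤ c := by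
    rintro ⟨d, ω, hωB, rfl⟩ ⟨d', ω', hω'B, rfl⟩ hd hd'
    have hEE : E ω = E ω' := by
      rw [hBdef, Set.mem_preimage, Set.mem_singleton_iff] at hωB hω'B
      rw [hωB, hω'B]
    exact hdiff ω ω' hEE (hμne _ hd) (hμne _ hd')
  have hcent : ∀ d, p d ≠ 0 → |w d - vE (b : γ)| ≤ c :=
    centered_bound p w P (vE (b : γ)) c hp hPsum (by rw [hvEbP]; exact hwsum) hP hpair
  have hz : HasSum (fun d => p d * (w d - vE (b : γ))) 0 := by
    have h1 := hwsum.sub (hPsum.mul_right (vE (b : γ)))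
    have h2 : (fun d => p d * w d - p d * vE (b : γ))
        = fun d => p d * (w d - vE (b : γ)) := by funext d; ring
    rw [h2] at h1
    have h3 : (∫ x in B, S x ∂ℙ) - P * vE (b : γ) = 0 := by
      rw [← hvEbP]; ring
    rwa [h3] at h1
  obtain ⟨hmsummable, hmain⟩ := weighted_hoeffding p (fun d => w d - vE (b : γ)) c t P
    hp hc hPsum hz hcent
  -- compute the LHS integral over B
  have hFconst : ∀ d : ↥(F '' B),
      ∫⁻ ω in F ⁻¹' {(d : δ)}, ENNReal.ofReal (Real.exp (t * vF (F ω))) ∂ℙ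
        = ENNReal.ofReal (Real.exp (t * w d)) * ℙ (F ⁻¹' {(d : δ)}) := by
    intro d
    rw [setLIntegral_congr_fun (hFm _) ?_, setLIntegral_const]
    intro ω hω
    rw [Set.mem_preimage, Set.mem_singleton_iff] at hω
    beta_reduce
    rw [hω]
  have hLHS : ∫⁻ ω in B, ENNReal.ofReal (Real.exp (t * vF (F ω))) ∂ℙ
      = ∑' d : ↥(F '' B), ENNReal.ofReal (Real.exp (t * w d)) * ℙ (F ⁻¹' {(d : δ)}) := by
    conv_lhs => rw [hBcover]
    rw [lintegral_iUnion (fun d => hFm _) hdisjF]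
    exact tsum_congr hFconst
  have hexp : ∀ d : ↥(F '' B), Real.exp (t * w d)
      = Real.exp (t * vE (b : γ)) * Real.exp (t * (w d - vE (b : γ))) := by
    intro d
    rw [← Real.exp_add]
    ring_nf
  have hterm : ∀ d : ↥(F '' B),
      ENNReal.ofReal (Real.exp (t * w d)) * ℙ (F ⁻¹' {(d : δ)})
        = ENNReal.ofReal (Real.exp (t * vE (b : γ))
            * (p d * Real.exp (t * (w d - vE (b : γ))))) := by
    intro d
    rw [← ENNReal.ofReal_toReal (measure_ne_top ℙ (F ⁻¹' {(d : δ)})),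
      ← ENNReal.ofReal_mul (Real.exp_pos _).le]
    congr 1
    rw [hexp d, show (ℙ (F ⁻¹' {(d : δ)})).toReal = p d from rfl]
    ring
  rw [hLHS]
  calc ∑' d : ↥(F '' B), ENNReal.ofReal (Real.exp (t * w d)) * ℙ (F ⁻¹' {(d : δ)})
      = ∑' d : ↥(F '' B), ENNReal.ofReal (Real.exp (t * vE (b : γ))
          * (p d * Real.exp (t * (w d - vE (b : γ))))) := tsum_congr hterm
    _ = ENNReal.ofReal (∑' d : ↥(F '' B), Real.exp (t * vE (b : γ))
          * (p d * Real.exp (t * (w d - vE (b : γ))))) := by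
        rw [ENNReal.ofReal_tsum_of_nonneg
          (fun d => by positivity) (hmsummable.mul_left _)]
    _ = ENNReal.ofReal (Real.exp (t * vE (b : γ))
          * ∑' d : ↥(F '' B), p d * Real.exp (t * (w d - vE (b : γ)))) := by
        rw [tsum_mul_left]
    _ ≤ ENNReal.ofReal (Real.exp (t * vE (b : γ)) * (P * Real.exp (t ^ 2 * c ^ 2 / 2))) := by
        apply ENNReal.ofReal_le_ofReal
        exact mul_le_mul_of_nonneg_left hmain (Real.exp_pos _).le
    _ = ENNReal.ofReal (Real.exp (t ^ 2 * c ^ 2 / 2))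
          * (ENNReal.ofReal (Real.exp (t * vE (b : γ))) * ℙ B) := by
        rw [← ENNReal.ofReal_toReal (measure_ne_top ℙ B), ← hPdef]
        rw [← ENNReal.ofReal_mul (Real.exp_pos _).le, ← ENNReal.ofReal_mul (Real.exp_pos _).le]
        congr 1
        ring


theorem aux_upper
    {Ω : Type*} [MeasureSpace Ω] [IsProbabilityMeasure (ℙ : Measure Ω)]
    (n : ℕ)
    (Y : Fin n → Ω → ℝ) (hYmeas : ∀ i, Measurable (Y i))
    (hYcount : ∀ i, (Set.range (Y i)).Countable)
    (S : Ω → ℝ) (hS : S = fun ω => ∑ i, Y i ω)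
    (hSint : Integrable S ℙ)
    (c : Fin n → ℝ) (hc : ∀ i, 0 ≤ c i)
    (hdiff : ∀ (i : Fin n) (ys : Fin n → ℝ) (y y' : ℝ),
      ℙ {ω | (∀ r, r < i → Y r ω = ys r) ∧ Y i ω = y} ≠ 0 →
      ℙ {ω | (∀ r, r < i → Y r ω = ys r) ∧ Y i ω = y'} ≠ 0 →
      |(∫ ω in {ω | (∀ r, r < i → Y r ω = ys r) ∧ Y i ω = y}, S ω ∂ℙ) /
          (ℙ {ω | (∀ r, r < i → Y r ω = ys r) ∧ Y i ω = y}).toReal -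
        (∫ ω in {ω | (∀ r, r < i → Y r ω = ys r) ∧ Y i ω = y'}, S ω ∂ℙ) /
          (ℙ {ω | (∀ r, r < i → Y r ω = ys r) ∧ Y i ω = y'}).toReal| ≤ c i)
    (lam : ℝ) (hlam : 0 < lam) :
    ℙ {ω | S ω ≥ (∫ x, S x ∂ℙ) + lam}
        ≤ ENNReal.ofReal (Real.exp (-lam ^ 2 / (2 * ∑ i, c i ^ 2))) := by
  classical
  by_cases hQ : (∑ i, c i ^ 2) = 0
  · rw [hQ]
    norm_num
    exact prob_le_one
  have hQpos : 0 < ∑ i, c i ^ 2 :=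
    lt_of_le_of_ne (Finset.sum_nonneg fun i _ => sq_nonneg _) (Ne.symm hQ)
  set Q : ℝ := ∑ i, c i ^ 2 with hQdef
  set μS : ℝ := ∫ x, S x ∂ℙ with hμS
  set t : ℝ := lam / Q with htdef
  have ht : 0 < t := div_pos hlam hQpos
  set e : ℕ → Ω → (Fin n → ℝ) := fun i ω r => if (r : ℕ) < i then Y r ω else 0 with hedef
  set g : ℕ → Ω → ℝ := fun i ω =>
    (∫ x in (e i) ⁻¹' {e i ω}, S x ∂ℙ) / (ℙ ((e i) ⁻¹' {e i ω})).toReal with hgdef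
  have hSmeas : Measurable S := by
    rw [hS]; exact Finset.measurable_sum Finset.univ (fun i _ => hYmeas i)
  -- measurability of fibers
  have hfib_meas : ∀ (i : ℕ) (ys : Fin n → ℝ), MeasurableSet ((e i) ⁻¹' {ys}) := by
    intro i ys
    have : (e i) ⁻¹' {ys} = ⋂ r : Fin n, {ω | (if (r : ℕ) < i then Y r ω else 0) = ys r} := by
      ext ω
      simp only [Set.mem_preimage, Set.mem_singleton_iff, Set.mem_iInter, Set.mem_setOf_eq,
        hedef, funext_iff]
    rw [this]
    apply MeasurableSet.iInter
    intro r
    by_cases hri : (r : ℕ) < i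
    · simp only [if_pos hri]
      exact hYmeas r (measurableSet_singleton (ys r))
    · simp only [if_neg hri]
      by_cases hz : (0 : ℝ) = ys r
      · simp [hz]
      · simp [hz]
  -- countability of ranges
  have hrange : ∀ i : ℕ, (Set.range (e i)).Countable := by
    intro i
    apply Set.Countable.mono _ (Set.countable_pi
      (s := fun r : Fin n => insert (0:ℝ) (Set.range (Y r))) (fun r => (hYcount r).insert 0))
    rintro _ ⟨ω, rfl⟩ r
    simp only [hedef]
    by_cases hri : (r : ℕ) < i
    · simp only [if_pos hri]
      exact Set.mem_insert_iff.2 (Or.inr (Set.mem_range_self ω))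
    · simp only [if_neg hri]
      exact Set.mem_insert 0 _
  -- refinement
  have hrefine : ∀ (i : ℕ) (ω : Ω),
      e i ω = (fun (ys : Fin n → ℝ) (r : Fin n) => if (r : ℕ) < i then ys r else 0)
        (e (i + 1) ω) := by
    intro i ω
    funext r
    simp only [hedef]
    by_cases hri : (r : ℕ) < i
    · simp [hri, Nat.lt_succ_of_lt hri]
    · simp [hri]
  -- the key inductive bound
  have key : ∀ i : ℕ, i ≤ n →
      ∫⁻ ω, ENNReal.ofReal (Real.exp (t * g i ω)) ∂ℙ
        ≤ ENNReal.ofReal (Real.exp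
            (t ^ 2 * (∑ j : Fin n, if (j : ℕ) < i then c j ^ 2 else 0) / 2 + t * μS)) := by
    intro i
    induction i with
    | zero =>
      intro _
      have hfib0 : ∀ ω : Ω, (e 0) ⁻¹' {e 0 ω} = Set.univ := by
        intro ω
        ext ω'
        simp only [Set.mem_preimage, Set.mem_singleton_iff, Set.mem_univ, iff_true, hedef,
          funext_iff]
        intro r
        simp
      have hg0 : ∀ ω, g 0 ω = μS := by
        intro ω
        simp only [hgdef, hfib0 ω, Measure.restrict_univ, measure_univ, ENNReal.toReal_one,
          div_one, hμS]
      have : (fun ω => ENNReal.ofReal (Real.exp (t * g 0 ω)))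
          = fun _ => ENNReal.ofReal (Real.exp (t * μS)) := by
        funext ω; rw [hg0 ω]
      rw [this, lintegral_const, measure_univ, mul_one]
      apply ENNReal.ofReal_le_ofReal
      apply Real.exp_le_exp.2
      simp
    | succ i ih =>
      intro hin
      have hi : i < n := hin
      have ihb := ih (le_of_lt hi)
      set I : Fin n := ⟨i, hi⟩ with hIdef
      -- identify fibers of e (i+1) with the sets in hdiff
      have hfib_eq : ∀ (ω₀ : Ω) (ys : Fin n → ℝ), (∀ r : Fin n, (r : ℕ) < i → Y r ω₀ = ys r) →
          (e (i + 1)) ⁻¹' {e (i + 1) ω₀}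
            = {ω' | (∀ r, r < I → Y r ω' = ys r) ∧ Y I ω' = Y I ω₀} := by
        intro ω₀ ys hys
        ext ω''
        simp only [Set.mem_preimage, Set.mem_singleton_iff, Set.mem_setOf_eq, hedef, funext_iff]
        constructor
        · intro h
          constructor
          · intro r hr
            have hr' : (r : ℕ) < i := hr
            have := h r
            rw [if_pos (Nat.lt_succ_of_lt hr'), if_pos (Nat.lt_succ_of_lt hr')] at this
            rw [this, hys r hr']
          · have := h I
            rw [if_pos (Nat.lt_succ_of_le (le_refl i)), if_pos (Nat.lt_succ_of_le (le_refl i))]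
              at this
            exact this
        · rintro ⟨h1, h2⟩ r
          by_cases hr : (r : ℕ) < i + 1
          · rw [if_pos hr, if_pos hr]
            by_cases hr' : (r : ℕ) < i
            · have hrI : r < I := hr'
              rw [h1 r hrI, hys r hr']
            · have : (r : ℕ) = i := by omega
              have hrI : r = I := by
                apply Fin.ext
                exact this
              rw [hrI]
              exact h2
          · rw [if_neg hr, if_neg hr]
      have hstep := step_lemma (e i) (e (i + 1))
        (fun (ys : Fin n → ℝ) (r : Fin n) => if (r : ℕ) < i then ys r else 0)
        (hrefine i) (hrange i) (hrange (i + 1)) (hfib_meas i) (hfib_meas (i + 1)) S hSint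
        (c I) t (hc I) ?_
      · refine le_trans hstep ?_
        calc ENNReal.ofReal (Real.exp (t ^ 2 * c I ^ 2 / 2)) *
              ∫⁻ ω, ENNReal.ofReal (Real.exp (t * g i ω)) ∂ℙ
            ≤ ENNReal.ofReal (Real.exp (t ^ 2 * c I ^ 2 / 2)) *
              ENNReal.ofReal (Real.exp
                (t ^ 2 * (∑ j : Fin n, if (j : ℕ) < i then c j ^ 2 else 0) / 2 + t * μS)) :=
              mul_le_mul_right ihb _
          _ = ENNReal.ofReal (Real.exp
                (t ^ 2 * (∑ j : Fin n, if (j : ℕ) < i + 1 then c j ^ 2 else 0) / 2 + t * μS)) := by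
              rw [← ENNReal.ofReal_mul (Real.exp_pos _).le, ← Real.exp_add]
              congr 1
              have hsum : (∑ j : Fin n, if (j : ℕ) < i + 1 then c j ^ 2 else 0)
                  = (∑ j : Fin n, if (j : ℕ) < i then c j ^ 2 else 0) + c I ^ 2 := by
                have hIval : (I : ℕ) = i := rfl
                have h1 : ∀ j : Fin n, (if (j : ℕ) < i + 1 then c j ^ 2 else 0)
                    = (if (j : ℕ) < i then c j ^ 2 else 0)
                      + (if j = I then c j ^ 2 else 0) := by
                  intro j
                  by_cases hjI : j = I
                  · subst hjI
                    rw [if_pos (by omega), if_neg (by omega), if_pos rfl]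
                    ring
                  · have hne : (j : ℕ) ≠ i := fun h => hjI (Fin.ext (h.trans hIval.symm))
                    rw [if_neg hjI]
                    by_cases hji : (j : ℕ) < i
                    · rw [if_pos (by omega), if_pos hji]
                      ring
                    · rw [if_neg (by omega), if_neg hji]
                      ring
                rw [Finset.sum_congr rfl (fun j _ => h1 j), Finset.sum_add_distrib,
                  Finset.sum_ite_eq' Finset.univ I (fun j => c j ^ 2)]
                simp
              rw [hsum]
              ring
      · -- the bounded-difference hypothesis for step_lemma
        intro ω ω' hEE hμ1 hμ2
        set ys : Fin n → ℝ := fun r => Y r ω with hysdef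
        have hysω : ∀ r : Fin n, (r : ℕ) < i → Y r ω = ys r := fun r _ => rfl
        have hysω' : ∀ r : Fin n, (r : ℕ) < i → Y r ω' = ys r := by
          intro r hr
          have := congrFun hEE r
          simp only [hedef, if_pos hr] at this
          exact this.symm ▸ rfl
        have h1 := hfib_eq ω ys hysω
        have h2 := hfib_eq ω' ys hysω'
        rw [h1, h2]
        rw [h1] at hμ1
        rw [h2] at hμ2
        exact hdiff I ys (Y I ω) (Y I ω') hμ1 hμ2
  have keyn := key n (le_refl n)
  have hsumn : (∑ j : Fin n, if (j : ℕ) < n then c j ^ 2 else 0) = Q := by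
    rw [hQdef]
    exact Finset.sum_congr rfl (fun j _ => if_pos j.isLt)
  rw [hsumn] at keyn
  -- g n = S almost everywhere
  have hgn : ∀ᵐ ω ∂ℙ, g n ω = S ω := by
    have hnull : ℙ (⋃ b : ↥{ys ∈ Set.range (e n) | ℙ ((e n) ⁻¹' {ys}) = 0},
        (e n) ⁻¹' {(b : Fin n → ℝ)}) = 0 := by
      haveI : Countable ↥{ys ∈ Set.range (e n) | ℙ ((e n) ⁻¹' {ys}) = 0} :=
        ((hrange n).mono (Set.sep_subset _ _)).to_subtype
      refine measure_iUnion_null fun b => b.2.2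
    filter_upwards [measure_eq_zero_iff_ae_notMem.1 hnull] with ω hω
    have hμfib : ℙ ((e n) ⁻¹' {e n ω}) ≠ 0 := by
      intro h0
      exact hω (Set.mem_iUnion.2 ⟨⟨e n ω, Set.mem_range_self ω, h0⟩, rfl⟩)
    have hconst : ∀ ω' ∈ (e n) ⁻¹' {e n ω}, S ω' = S ω := by
      intro ω' hω'
      rw [Set.mem_preimage, Set.mem_singleton_iff] at hω'
      have hY : ∀ r : Fin n, Y r ω' = Y r ω := by
        intro r
        have := congrFun hω' r
        simp only [hedef, if_pos r.isLt] at this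
        exact this
      rw [hS]
      exact Finset.sum_congr rfl (fun r _ => hY r)
    have hint : ∫ x in (e n) ⁻¹' {e n ω}, S x ∂ℙ = (ℙ ((e n) ⁻¹' {e n ω})).toReal * S ω := by
      rw [setIntegral_congr_fun (hfib_meas n _) hconst, setIntegral_const, smul_eq_mul, measureReal_def]
    have hp0 : (ℙ ((e n) ⁻¹' {e n ω})).toReal ≠ 0 := by
      simp only [ne_eq, ENNReal.toReal_eq_zero_iff, measure_ne_top, or_false]
      exact hμfib
    rw [hgdef]
    simp only
    rw [hint, mul_comm, mul_div_assoc, div_self hp0, mul_one]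
  have hSlint : ∫⁻ ω, ENNReal.ofReal (Real.exp (t * S ω)) ∂ℙ
      ≤ ENNReal.ofReal (Real.exp (t ^ 2 * Q / 2 + t * μS)) := by
    refine le_trans (le_of_eq (lintegral_congr_ae ?_)) keyn
    filter_upwards [hgn] with ω h
    rw [h]
  -- Markov / Chernoff
  have hfmeas : Measurable fun ω => ENNReal.ofReal (Real.exp (t * S ω)) :=
    ENNReal.measurable_ofReal.comp (Real.measurable_exp.comp (hSmeas.const_mul t))
  have hmarkov := mul_meas_ge_le_lintegral₀ (μ := ℙ) hfmeas.aemeasurable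
    (ENNReal.ofReal (Real.exp (t * (μS + lam))))
  have hsubset : {ω | S ω ≥ μS + lam}
      ⊆ {ω | ENNReal.ofReal (Real.exp (t * (μS + lam)))
          ≤ ENNReal.ofReal (Real.exp (t * S ω))} := by
    intro ω hω
    exact ENNReal.ofReal_le_ofReal (Real.exp_le_exp.2
      (mul_le_mul_of_nonneg_left hω ht.le))
  have hchain : ENNReal.ofReal (Real.exp (t * (μS + lam))) * ℙ {ω | S ω ≥ μS + lam}
      ≤ ENNReal.ofReal (Real.exp (t ^ 2 * Q / 2 + t * μS)) :=
    le_trans (mul_le_mul_right (measure_mono hsubset) _) (le_trans hmarkov hSlint)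
  have hne0 : ENNReal.ofReal (Real.exp (t * (μS + lam))) ≠ 0 := by
    simp [Real.exp_pos]
  have hnetop : ENNReal.ofReal (Real.exp (t * (μS + lam))) ≠ ⊤ := ENNReal.ofReal_ne_top
  have hdiv : ℙ {ω | S ω ≥ μS + lam}
      ≤ ENNReal.ofReal (Real.exp (t ^ 2 * Q / 2 + t * μS))
        / ENNReal.ofReal (Real.exp (t * (μS + lam))) := by
    rw [ENNReal.le_div_iff_mul_le (Or.inl hne0) (Or.inl hnetop), mul_comm]
    exact hchain
  refine le_trans hdiv (le_of_eq ?_)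
  rw [← ENNReal.ofReal_div_of_pos (Real.exp_pos _), ← Real.exp_sub]
  congr 1
  rw [htdef]
  field_simp
  ring

/-- Azuma-type concentration for a sum `S = Y₁ + ⋯ + Yₙ` of (not necessarily
independent) countably-valued random variables, under a bounded-difference condition on the
conditional expectations `E[S | Y₁=y₁,…,Y_{i-1}=y_{i-1}, Y_i=y]` (each formalized as
`(∫ S on the event) / ℙ(event)`). -/
theorem azuma_dependent_sum
    {Ω : Type*} [MeasureSpace Ω] [IsProbabilityMeasure (ℙ : Measure Ω)]
    (n : ℕ) (hn : 1 < n)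
    (Y : Fin n → Ω → ℝ) (hYmeas : ∀ i, Measurable (Y i))
    (hYcount : ∀ i, (Set.range (Y i)).Countable)
    (S : Ω → ℝ) (hS : S = fun ω => ∑ i, Y i ω)
    (hSint : Integrable S ℙ)
    (c : Fin n → ℝ) (hc : ∀ i, 0 ≤ c i)
    (hdiff : ∀ (i : Fin n) (ys : Fin n → ℝ) (y y' : ℝ),
      ℙ {ω | (∀ r, r < i → Y r ω = ys r) ∧ Y i ω = y} ≠ 0 →
      ℙ {ω | (∀ r, r < i → Y r ω = ys r) ∧ Y i ω = y'} ≠ 0 →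
      |(∫ ω in {ω | (∀ r, r < i → Y r ω = ys r) ∧ Y i ω = y}, S ω ∂ℙ) /
          (ℙ {ω | (∀ r, r < i → Y r ω = ys r) ∧ Y i ω = y}).toReal -
        (∫ ω in {ω | (∀ r, r < i → Y r ω = ys r) ∧ Y i ω = y'}, S ω ∂ℙ) /
          (ℙ {ω | (∀ r, r < i → Y r ω = ys r) ∧ Y i ω = y'}).toReal| ≤ c i)
    (lam : ℝ) (hlam : 0 < lam) :
    ℙ {ω | S ω ≥ (∫ x, S x ∂ℙ) + lam}
        ≤ ENNReal.ofReal (Real.exp (-lam ^ 2 / (2 * ∑ i, c i ^ 2))) ∧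
    ℙ {ω | S ω ≤ (∫ x, S x ∂ℙ) - lam}
        ≤ ENNReal.ofReal (Real.exp (-lam ^ 2 / (2 * ∑ i, c i ^ 2))) := by
  constructor
  · exact aux_upper n Y hYmeas hYcount S hS hSint c hc hdiff lam hlam
  · -- lower tail: apply the upper-tail bound to -S and -Y
    set Y' : Fin n → Ω → ℝ := fun i ω => -(Y i ω) with hY'def
    set S' : Ω → ℝ := fun ω => -(S ω) with hS'def
    have hY'meas : ∀ i, Measurable (Y' i) := fun i => (hYmeas i).neg
    have hY'count : ∀ i, (Set.range (Y' i)).Countable := by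
      intro i
      have : Set.range (Y' i) ⊆ Neg.neg '' Set.range (Y i) := by
        rintro _ ⟨ω, rfl⟩
        exact ⟨Y i ω, Set.mem_range_self ω, rfl⟩
      exact ((hYcount i).image Neg.neg).mono this
    have hS' : S' = fun ω => ∑ i, Y' i ω := by
      funext ω
      simp only [hS'def, hY'def, hS]
      rw [← Finset.sum_neg_distrib]
    have hS'int : Integrable S' ℙ := hSint.neg
    have hseteq : ∀ (i : Fin n) (ys : Fin n → ℝ) (y : ℝ),
        {ω | (∀ r, r < i → Y' r ω = ys r) ∧ Y' i ω = y}
          = {ω | (∀ r, r < i → Y r ω = (-ys) r) ∧ Y i ω = -y} := by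
      intro i ys y
      ext ω
      simp only [Set.mem_setOf_eq, hY'def, Pi.neg_apply, neg_eq_iff_eq_neg]
    have hdiff' : ∀ (i : Fin n) (ys : Fin n → ℝ) (y y' : ℝ),
        ℙ {ω | (∀ r, r < i → Y' r ω = ys r) ∧ Y' i ω = y} ≠ 0 →
        ℙ {ω | (∀ r, r < i → Y' r ω = ys r) ∧ Y' i ω = y'} ≠ 0 →
        |(∫ ω in {ω | (∀ r, r < i → Y' r ω = ys r) ∧ Y' i ω = y}, S' ω ∂ℙ) /
            (ℙ {ω | (∀ r, r < i → Y' r ω = ys r) ∧ Y' i ω = y}).toReal -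
          (∫ ω in {ω | (∀ r, r < i → Y' r ω = ys r) ∧ Y' i ω = y'}, S' ω ∂ℙ) /
            (ℙ {ω | (∀ r, r < i → Y' r ω = ys r) ∧ Y' i ω = y'}).toReal| ≤ c i := by
      intro i ys y y' h1 h2
      rw [hseteq i ys y] at h1 ⊢
      rw [hseteq i ys y'] at h2 ⊢
      have hneg : ∀ A : Set Ω, (∫ ω in A, S' ω ∂ℙ) = -(∫ ω in A, S ω ∂ℙ) := by
        intro A
        simp only [hS'def]
        exact integral_neg S
      rw [hneg, hneg, neg_div, neg_div, ← neg_sub', abs_neg, ← neg_sub, abs_neg, abs_sub_comm]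
      exact hdiff i (-ys) (-y) (-y') h1 h2
    have hupper := aux_upper n Y' hY'meas hY'count S' hS' hS'int c hc hdiff' lam hlam
    have hintS' : (∫ x, S' x ∂ℙ) = -(∫ x, S x ∂ℙ) := by
      simp only [hS'def]
      exact integral_neg S
    rw [hintS'] at hupper
    have hseteq2 : {ω | S' ω ≥ -(∫ x, S x ∂ℙ) + lam} = {ω | S ω ≤ (∫ x, S x ∂ℙ) - lam} := by
      ext ω
      simp only [Set.mem_setOf_eq, hS'def, ge_iff_le]
      constructor <;> intro h <;> linarith
    rwa [hseteq2] at hupper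
end

section
/- Let Y₁, …, Yₙ (n > 1) be random variables, not necessarily independent, each taking values in a countable set, and let S = Y₁ + ⋯ + Yₙ be integrable. Suppose for each i there is a constant cᵢ ≥ 0 such that for every tuple (y₁,…,y_{i−1}) and every pair of values y, y′ with Pr(Y₁=y₁,…,Y_{i−1}=y_{i−1}, Y_i=y) > 0 and Pr(Y₁=y₁,…,Y_{i−1}=y_{i−1}, Y_i=y′) > 0, one has |E[S | Y₁=y₁,…,Y_{i−1}=y_{i−1}, Y_i=y] − E[S | Y₁=y₁,…,Y_{i−1}=y_{i−1}, Y_i=y′]| ≤ cᵢ. Then the Doob sequence Z₀ = E[S], Z_i = E[S | σ(Y₁,…,Y_i)] for i = 1,…,n, is a martingale with respect to the filtration (σ(Y₁,…,Y_i))ᵢ, Zₙ = S almost surely, and |Z_i − Z_{i−1}| ≤ cᵢ almost surely for every i. -/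
open MeasureTheory ProbabilityTheory

section Aux
variable {Ω : Type*} {n : ℕ} (Y : Fin n → Ω → ℝ)

noncomputable def wM (i : ℕ) : Ω → (Fin n → ℝ) :=
  fun ω r => if (r : ℕ) < i then Y r ω else 0

lemma wM_fiber (i : ℕ) (ω : Ω) :
    wM Y i ⁻¹' {wM Y i ω} = {ω' | ∀ r : Fin n, (r : ℕ) < i → Y r ω' = Y r ω} := by
  ext ω'
  simp only [Set.mem_preimage, Set.mem_singleton_iff, funext_iff, wM, Set.mem_setOf_eq]
  constructor
  · intro h r hr; have := h r; simpa [hr] using this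
  · intro h r; by_cases hr : (r : ℕ) < i <;> simp [hr, h r]

lemma wM_range_countable (hYcount : ∀ i, (Set.range (Y i)).Countable) (i : ℕ) :
    (Set.range (wM Y i)).Countable := by
  have hsub : Set.range (wM Y i) ⊆ Set.pi Set.univ
      (fun r : Fin n => insert (0:ℝ) (Set.range (Y r))) := by
    rintro _ ⟨ω, rfl⟩ r _
    by_cases hr : (r : ℕ) < i <;> simp [wM, hr, Set.mem_range_self]
  exact (Set.countable_univ_pi fun r => ((hYcount r).insert 0)).mono hsub

lemma wM_measurable' {m : MeasurableSpace Ω} (i : ℕ)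
    (hY2 : ∀ r : Fin n, (r : ℕ) < i → Measurable[m] (Y r)) :
    Measurable[m] (wM Y i) := by
  apply measurable_pi_lambda
  intro r
  by_cases hr : (r : ℕ) < i
  · simpa [wM, hr] using hY2 r hr
  · simp only [wM, hr, if_false]
    exact @measurable_const ℝ Ω _ m 0

lemma iSup_comap_le (i : ℕ) :
    (⨆ (r : Fin n) (_ : (r : ℕ) < i), MeasurableSpace.comap (Y r) inferInstance)
      ≤ MeasurableSpace.comap (wM Y i) inferInstance := by
  refine iSup₂_le fun r hr => ?_
  have hYr : Y r = (fun v : Fin n → ℝ => v r) ∘ (wM Y i) := by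
    funext ω; simp [wM, hr]
  rw [hYr, ← MeasurableSpace.comap_comp]
  exact MeasurableSpace.comap_mono (measurable_pi_apply r).comap_le

lemma eq_on_fiber {β : Type*} [mβ : MeasurableSpace β] (W : Ω → β) {f : Ω → ℝ}
    (hf : Measurable[MeasurableSpace.comap W mβ] f) {ω ω' : Ω} (h : W ω = W ω') :
    f ω = f ω' := by
  have hms : MeasurableSet[MeasurableSpace.comap W mβ] (f ⁻¹' {f ω}) :=
    hf (measurableSet_singleton _)
  obtain ⟨t, ht, hts⟩ := hms
  have hω : ω ∈ W ⁻¹' t := by rw [hts]; exact rfl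
  have hω' : ω' ∈ W ⁻¹' t := by simpa [Set.mem_preimage, ← h] using hω
  rw [hts] at hω'
  exact hω'.symm

lemma ae_fiber_pos {β : Type*} [MeasurableSpace β] [MeasurableSingletonClass β]
    [MeasureSpace Ω]
    (W : Ω → β) (hc : (Set.range W).Countable) :
    ∀ᵐ ω ∂(ℙ : Measure Ω), ℙ (W ⁻¹' {W ω}) ≠ 0 := by
  set N : Set β := {v ∈ Set.range W | ℙ (W ⁻¹' {v}) = 0} with hN
  have hNc : N.Countable := hc.mono (Set.sep_subset _ _)
  have hnull : ℙ (⋃ v ∈ N, W ⁻¹' {v}) = 0 :=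
    (measure_biUnion_null_iff hNc).2 fun v hv => hv.2
  refine measure_mono_null (fun ω hω => ?_) hnull
  simp only [Set.mem_compl_iff, Set.mem_setOf_eq, not_not] at hω
  exact Set.mem_biUnion ⟨Set.mem_range_self ω, hω⟩ rfl

def sigAlg (i : ℕ) : MeasurableSpace Ω :=
  ⨆ (r : Fin n) (_ : (r : ℕ) < i), MeasurableSpace.comap (Y r) inferInstance

lemma condexp_fiber_avg [MeasureSpace Ω] [IsProbabilityMeasure (ℙ : Measure Ω)]
    (hYmeas : ∀ r, Measurable (Y r)) (hYcount : ∀ r, (Set.range (Y r)).Countable)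
    {S : Ω → ℝ} (hSint : Integrable S ℙ) (i : ℕ)
    (hm : sigAlg Y i ≤ MeasureSpace.toMeasurableSpace) :
    (ℙ[S| sigAlg Y i]) =ᵐ[ℙ] fun ω =>
      (∫ ω' in wM Y i ⁻¹' {wM Y i ω}, S ω' ∂ℙ) / (ℙ (wM Y i ⁻¹' {wM Y i ω})).toReal := by
  have hYm : ∀ r : Fin n, (r : ℕ) < i → Measurable[sigAlg Y i] (Y r) := by
    intro r hr
    have h1 : Measurable[MeasurableSpace.comap (Y r) inferInstance] (Y r) :=
      fun s hs => ⟨s, hs, rfl⟩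
    refine h1.mono ?_ le_rfl
    exact le_iSup₂ (f := fun (r : Fin n) (_ : (r : ℕ) < i) =>
      MeasurableSpace.comap (Y r) inferInstance) r hr
  have hWm : Measurable[sigAlg Y i] (wM Y i) := wM_measurable' Y i hYm
  have hWamb : Measurable (wM Y i) :=
    wM_measurable' (m := MeasureSpace.toMeasurableSpace) Y i (fun r _ => hYmeas r)
  have hcomap_le : sigAlg Y i ≤ MeasurableSpace.comap (wM Y i) inferInstance :=
    iSup_comap_le Y i
  have hfm : Measurable[MeasurableSpace.comap (wM Y i) inferInstance]
      (ℙ[S| sigAlg Y i]) :=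
    (stronglyMeasurable_condExp.measurable).mono hcomap_le le_rfl
  filter_upwards [ae_fiber_pos (wM Y i) (wM_range_countable Y hYcount i)] with ω hpos
  set A := wM Y i ⁻¹' {wM Y i ω} with hA
  have hAm : MeasurableSet[sigAlg Y i] A := hWm (measurableSet_singleton _)
  have hAamb : MeasurableSet A := hWamb (measurableSet_singleton _)
  have hint : ∫ ω' in A, (ℙ[S| sigAlg Y i]) ω' ∂ℙ = ∫ ω' in A, S ω' ∂ℙ :=
    setIntegral_condExp hm hSint hAm
  have hconst : ∫ ω' in A, (ℙ[S| sigAlg Y i]) ω' ∂ℙ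
      = (ℙ A).toReal • ((ℙ[S| sigAlg Y i]) ω) := by
    have heq : ∫ ω' in A, (ℙ[S| sigAlg Y i]) ω' ∂ℙ
        = ∫ _ω' in A, (ℙ[S| sigAlg Y i]) ω ∂ℙ :=
      setIntegral_congr_fun hAamb (fun ω' hω' => eq_on_fiber (wM Y i) hfm hω')
    rw [heq, setIntegral_const]; rfl
  have hPA : (ℙ A).toReal ≠ 0 :=
    ENNReal.toReal_ne_zero.2 ⟨hpos, measure_ne_top _ _⟩
  show (ℙ[S| sigAlg Y i]) ω = _
  rw [← hint, hconst, smul_eq_mul]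
  exact (mul_div_cancel_left₀ _ hPA).symm

lemma fiber_avg_diff [MeasureSpace Ω] [IsProbabilityMeasure (ℙ : Measure Ω)]
    (hYmeas : ∀ r, Measurable (Y r)) (hYcount : ∀ r, (Set.range (Y r)).Countable)
    {S : Ω → ℝ} (hSint : Integrable S ℙ)
    (c : Fin n → ℝ)
    (hdiff : ∀ (i : Fin n) (ys : Fin n → ℝ) (y y' : ℝ),
      ℙ {ω | (∀ r, r < i → Y r ω = ys r) ∧ Y i ω = y} ≠ 0 →
      ℙ {ω | (∀ r, r < i → Y r ω = ys r) ∧ Y i ω = y'} ≠ 0 →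
      |(∫ ω in {ω | (∀ r, r < i → Y r ω = ys r) ∧ Y i ω = y}, S ω ∂ℙ) /
          (ℙ {ω | (∀ r, r < i → Y r ω = ys r) ∧ Y i ω = y}).toReal -
        (∫ ω in {ω | (∀ r, r < i → Y r ω = ys r) ∧ Y i ω = y'}, S ω ∂ℙ) /
          (ℙ {ω | (∀ r, r < i → Y r ω = ys r) ∧ Y i ω = y'}).toReal| ≤ c i)
    (i : Fin n) :
    ∀ᵐ ω ∂(ℙ : Measure Ω),
      |(∫ ω' in wM Y ((i : ℕ) + 1) ⁻¹' {wM Y ((i : ℕ) + 1) ω}, S ω' ∂ℙ) /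
          (ℙ (wM Y ((i : ℕ) + 1) ⁻¹' {wM Y ((i : ℕ) + 1) ω})).toReal -
        (∫ ω' in wM Y (i : ℕ) ⁻¹' {wM Y (i : ℕ) ω}, S ω' ∂ℙ) /
          (ℙ (wM Y (i : ℕ) ⁻¹' {wM Y (i : ℕ) ω})).toReal| ≤ c i := by
  filter_upwards [ae_fiber_pos (wM Y ((i : ℕ) + 1))
    (wM_range_countable Y hYcount ((i : ℕ) + 1))] with ω hpos1
  have hWamb : Measurable (wM Y (i : ℕ)) :=
    wM_measurable' (m := MeasureSpace.toMeasurableSpace) Y (i : ℕ) (fun r _ => hYmeas r)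
  -- the cells
  set B : ℝ → Set Ω :=
    fun y => {ω' | (∀ r, r < i → Y r ω' = (fun r => Y r ω) r) ∧ Y i ω' = y} with hBdef
  set A : Set Ω := wM Y (i : ℕ) ⁻¹' {wM Y (i : ℕ) ω} with hAdef
  have hA1 : wM Y ((i : ℕ) + 1) ⁻¹' {wM Y ((i : ℕ) + 1) ω} = B (Y i ω) := by
    rw [wM_fiber]
    ext ω'
    simp only [Set.mem_setOf_eq, hBdef]
    constructor
    · intro h
      exact ⟨fun r hr => h r (Nat.lt_succ_of_lt hr), h i (Nat.lt_succ_self _)⟩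
    · rintro ⟨h1, h2⟩ r hr
      rcases Nat.lt_succ_iff_lt_or_eq.1 hr with h | h
      · exact h1 r h
      · have : r = i := Fin.ext h
        rw [this, h2]
  have hBsub : ∀ y, B y ⊆ A := by
    intro y ω' hω'
    rw [hAdef, wM_fiber]
    exact fun r hr => hω'.1 r hr
  have hBmeas : ∀ y, MeasurableSet (B y) := by
    intro y
    have : B y = A ∩ (Y i) ⁻¹' {y} := by
      rw [hAdef, wM_fiber]
      ext ω'; simp only [Set.mem_setOf_eq, Set.mem_inter_iff, Set.mem_preimage,
        Set.mem_singleton_iff, hBdef]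
      exact Iff.rfl
    rw [this]
    exact (hWamb (measurableSet_singleton _)).inter (hYmeas i (measurableSet_singleton _))
  have := (hYcount i).to_subtype
  have hAcup : A = ⋃ y : Set.range (Y i), B (y : ℝ) := by
    ext ω'
    constructor
    · intro hω'
      refine Set.mem_iUnion.2 ⟨⟨Y i ω', Set.mem_range_self ω'⟩, ?_⟩
      rw [hAdef, wM_fiber] at hω'
      exact ⟨fun r hr => hω' r hr, rfl⟩
    · rintro hω'
      obtain ⟨y, hy⟩ := Set.mem_iUnion.1 hω'
      exact hBsub _ hy
  have hdisj : Pairwise (Function.onFun Disjoint fun y : Set.range (Y i) => B (y : ℝ)) := by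
    intro y y' hne
    refine Set.disjoint_left.2 fun x hx hx' => hne ?_
    exact Subtype.ext (hx.2 ▸ hx'.2 ▸ rfl)
  have hIntOn : IntegrableOn S (⋃ y : Set.range (Y i), B (y : ℝ)) ℙ :=
    hSint.integrableOn
  have hPA : ℙ A = ∑' y : Set.range (Y i), ℙ (B (y : ℝ)) := by
    rw [hAcup]; exact measure_iUnion hdisj (fun y => hBmeas _)
  have hsumI : HasSum (fun y : Set.range (Y i) => ∫ ω' in B (y : ℝ), S ω' ∂ℙ)
      (∫ ω' in A, S ω' ∂ℙ) := by
    rw [hAcup]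
    exact hasSum_integral_iUnion (fun y => hBmeas _) hdisj hIntOn
  -- the two averages
  set mm : ℝ := (∫ ω' in B (Y i ω), S ω' ∂ℙ) / (ℙ (B (Y i ω))).toReal with hmm
  have hposB : ℙ (B (Y i ω)) ≠ 0 := by rw [← hA1]; exact hpos1
  have hposA : ℙ A ≠ 0 := fun h =>
    hposB (measure_mono_null (hBsub (Y i ω)) h)
  have hPAne : (ℙ A).toReal ≠ 0 := ENNReal.toReal_ne_zero.2 ⟨hposA, measure_ne_top _ _⟩
  have hPApos : 0 < (ℙ A).toReal :=
    lt_of_le_of_ne ENNReal.toReal_nonneg (Ne.symm hPAne)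
  -- key cellwise bound
  have key : ∀ y : Set.range (Y i),
      |(∫ ω' in B (y : ℝ), S ω' ∂ℙ) - mm * (ℙ (B (y : ℝ))).toReal|
        ≤ c i * (ℙ (B (y : ℝ))).toReal := by
    intro y
    by_cases h0 : ℙ (B (y : ℝ)) = 0
    · have hz : ∫ ω' in B (y : ℝ), S ω' ∂ℙ = 0 := by
        rw [show (ℙ : Measure Ω).restrict (B (y : ℝ)) = 0 from
          Measure.restrict_eq_zero.2 h0]
        exact integral_zero_measure _
      rw [hz, h0]
      simp
    · have hd := hdiff i (fun r => Y r ω) (y : ℝ) (Y i ω) h0 hposB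
      set P : ℝ := (ℙ (B (y : ℝ))).toReal with hP
      have hPne : P ≠ 0 := ENNReal.toReal_ne_zero.2 ⟨h0, measure_ne_top _ _⟩
      have hPnn : 0 ≤ P := ENNReal.toReal_nonneg
      have : (∫ ω' in B (y : ℝ), S ω' ∂ℙ) - mm * P
          = ((∫ ω' in B (y : ℝ), S ω' ∂ℙ) / P - mm) * P := by
        field_simp
      rw [this, abs_mul, abs_of_nonneg hPnn]
      exact mul_le_mul_of_nonneg_right hd hPnn
  -- summability
  have sPB : Summable (fun y : Set.range (Y i) => (ℙ (B (y : ℝ))).toReal) :=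
    ENNReal.summable_toReal (by rw [← hPA]; exact measure_ne_top _ _)
  have sI : Summable (fun y : Set.range (Y i) => ∫ ω' in B (y : ℝ), S ω' ∂ℙ) :=
    hsumI.summable
  have sM : Summable (fun y : Set.range (Y i) => mm * (ℙ (B (y : ℝ))).toReal) :=
    sPB.mul_left mm
  have sF : Summable (fun y : Set.range (Y i) =>
      (∫ ω' in B (y : ℝ), S ω' ∂ℙ) - mm * (ℙ (B (y : ℝ))).toReal) := sI.sub sM
  have htoReal : (ℙ A).toReal = ∑' y : Set.range (Y i), (ℙ (B (y : ℝ))).toReal := by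
    rw [hPA, ENNReal.tsum_toReal_eq (fun y => measure_ne_top _ _)]
  have htsumF : (∑' y : Set.range (Y i),
      ((∫ ω' in B (y : ℝ), S ω' ∂ℙ) - mm * (ℙ (B (y : ℝ))).toReal))
      = (∫ ω' in A, S ω' ∂ℙ) - mm * (ℙ A).toReal := by
    rw [Summable.tsum_sub sI sM, hsumI.tsum_eq, tsum_mul_left, ← htoReal]
  have hbound : |(∫ ω' in A, S ω' ∂ℙ) - mm * (ℙ A).toReal| ≤ c i * (ℙ A).toReal := by
    rw [← htsumF]
    calc |∑' y : Set.range (Y i),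
        ((∫ ω' in B (y : ℝ), S ω' ∂ℙ) - mm * (ℙ (B (y : ℝ))).toReal)|
        ≤ ∑' y : Set.range (Y i),
          |(∫ ω' in B (y : ℝ), S ω' ∂ℙ) - mm * (ℙ (B (y : ℝ))).toReal| := by
          simpa using norm_tsum_le_tsum_norm (f := fun y : Set.range (Y i) =>
            (∫ ω' in B (y : ℝ), S ω' ∂ℙ) - mm * (ℙ (B (y : ℝ))).toReal)
            (by simpa using sF.abs)
      _ ≤ ∑' y : Set.range (Y i), c i * (ℙ (B (y : ℝ))).toReal :=
          Summable.tsum_le_tsum key sF.abs (sPB.mul_left _)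
      _ = c i * (ℙ A).toReal := by rw [tsum_mul_left, ← htoReal]
  -- conclude
  rw [hA1, ← hmm]
  have heq : (∫ ω' in A, S ω' ∂ℙ) / (ℙ A).toReal - mm
      = ((∫ ω' in A, S ω' ∂ℙ) - mm * (ℙ A).toReal) / (ℙ A).toReal := by
    field_simp
  rw [abs_sub_comm, heq, abs_div, abs_of_pos hPApos, div_le_iff₀ hPApos]
  exact hbound

end Aux

/-- the Doob sequence `Z₀ = E[S]`, `Z_i = E[S | σ(Y₁,…,Y_i)]` associated with a
sum `S = Y₁ + ⋯ + Yₙ` of (not necessarily independent) countably-valued random variables is a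
martingale with respect to the filtration `σ(Y₁,…,Y_i)`, ends at `Zₙ = S` a.s., and has
differences bounded by the constants `cᵢ` from the conditional-expectation bounded-difference
condition. -/
theorem doob_sequence_martingale_bounded_differences
    {Ω : Type*} [MeasureSpace Ω] [IsProbabilityMeasure (ℙ : Measure Ω)]
    (n : ℕ) (hn : 1 < n)
    (Y : Fin n → Ω → ℝ) (hYmeas : ∀ i, Measurable (Y i))
    (hYcount : ∀ i, (Set.range (Y i)).Countable)
    (S : Ω → ℝ) (hS : S = fun ω => ∑ i, Y i ω)
    (hSint : Integrable S ℙ)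
    (c : Fin n → ℝ) (hc : ∀ i, 0 ≤ c i)
    (hdiff : ∀ (i : Fin n) (ys : Fin n → ℝ) (y y' : ℝ),
      ℙ {ω | (∀ r, r < i → Y r ω = ys r) ∧ Y i ω = y} ≠ 0 →
      ℙ {ω | (∀ r, r < i → Y r ω = ys r) ∧ Y i ω = y'} ≠ 0 →
      |(∫ ω in {ω | (∀ r, r < i → Y r ω = ys r) ∧ Y i ω = y}, S ω ∂ℙ) /
          (ℙ {ω | (∀ r, r < i → Y r ω = ys r) ∧ Y i ω = y}).toReal -
        (∫ ω in {ω | (∀ r, r < i → Y r ω = ys r) ∧ Y i ω = y'}, S ω ∂ℙ) /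
          (ℙ {ω | (∀ r, r < i → Y r ω = ys r) ∧ Y i ω = y'}).toReal| ≤ c i)
    (ℱ : Filtration ℕ (inferInstance : MeasurableSpace Ω))
    (hℱ : ∀ i : ℕ, ℱ i
      = ⨆ (r : Fin n) (_ : (r : ℕ) < i), MeasurableSpace.comap (Y r) inferInstance)
    (Z : ℕ → Ω → ℝ)
    (hZ0 : Z 0 = fun _ => ∫ x, S x ∂ℙ)
    (hZ : ∀ i : ℕ, 1 ≤ i → Z i = ℙ[S|ℱ i]) :
    Martingale Z ℱ ℙ ∧ Z n =ᵐ[ℙ] S ∧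
      ∀ i : Fin n, ∀ᵐ ω ∂ℙ, |Z ((i : ℕ) + 1) ω - Z (i : ℕ) ω| ≤ c i := by
  -- abbreviations
  have hle : ∀ i : ℕ, sigAlg Y i ≤ MeasureSpace.toMeasurableSpace := by
    intro i
    have := ℱ.le i
    rw [hℱ i] at this
    exact this
  have hg0 : (fun ω : Ω => (∫ ω' in wM Y 0 ⁻¹' {wM Y 0 ω}, S ω' ∂ℙ) /
      (ℙ (wM Y 0 ⁻¹' {wM Y 0 ω})).toReal) = fun _ => ∫ x, S x ∂ℙ := by
    funext ω
    have hfib : wM Y 0 ⁻¹' {wM Y 0 ω} = Set.univ := by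
      rw [wM_fiber]; ext ω'; simp
    rw [hfib]
    simp [Measure.restrict_univ, measure_univ]
  have hZg : ∀ i : ℕ, Z i =ᵐ[ℙ] fun ω =>
      (∫ ω' in wM Y i ⁻¹' {wM Y i ω}, S ω' ∂ℙ) / (ℙ (wM Y i ⁻¹' {wM Y i ω})).toReal := by
    intro i
    rcases Nat.eq_zero_or_pos i with rfl | hi
    · rw [hZ0, hg0]
    · rw [hZ i hi, hℱ i]
      exact condexp_fiber_avg Y hYmeas hYcount hSint i (hle i)
  have hcond0 : ℙ[S|ℱ 0] =ᵐ[ℙ] Z 0 := by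
    have h1 : (ℙ[S|ℱ 0]) =ᵐ[ℙ] fun ω =>
        (∫ ω' in wM Y 0 ⁻¹' {wM Y 0 ω}, S ω' ∂ℙ) / (ℙ (wM Y 0 ⁻¹' {wM Y 0 ω})).toReal := by
      rw [hℱ 0]
      exact condexp_fiber_avg Y hYmeas hYcount hSint 0 (hle 0)
    rw [hg0] at h1
    rw [hZ0]
    exact h1
  have hmart : Martingale Z ℱ ℙ := by
    constructor
    · intro i
      match i with
      | 0 =>
        rw [hZ0]; exact stronglyMeasurable_const
      | (k+1) =>
        rw [hZ (k+1) (Nat.succ_le_succ (Nat.zero_le k))]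
        exact stronglyMeasurable_condExp
    · intro i j hij
      rcases Nat.eq_zero_or_pos i with rfl | hi
      · rcases Nat.eq_zero_or_pos j with rfl | hj
        · rw [hZ0, condExp_const (ℱ.le 0)]
        · rw [hZ j hj]
          exact (condExp_condExp_of_le (ℱ.mono (Nat.zero_le j)) (ℱ.le j)).trans hcond0
      · have hj : 1 ≤ j := le_trans hi hij
        rw [hZ i hi, hZ j hj]
        exact condExp_condExp_of_le (ℱ.mono hij) (ℱ.le j)
  have hZn : Z n =ᵐ[ℙ] S := by
    have hSm : StronglyMeasurable[ℱ n] S := by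
      rw [hS]
      apply Measurable.stronglyMeasurable
      apply Finset.measurable_sum
      intro r _
      have h1 : Measurable[MeasurableSpace.comap (Y r) inferInstance] (Y r) :=
        fun s hs => ⟨s, hs, rfl⟩
      refine h1.mono ?_ le_rfl
      rw [hℱ n]
      exact le_iSup₂ (f := fun (r : Fin n) (_ : (r : ℕ) < n) =>
        MeasurableSpace.comap (Y r) inferInstance) r r.isLt
    rw [hZ n (by omega)]
    exact Filter.EventuallyEq.of_eq (condExp_of_stronglyMeasurable (ℱ.le n) hSm hSint)
  refine ⟨hmart, hZn, ?_⟩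
  intro i
  have h3 := fiber_avg_diff Y hYmeas hYcount hSint c hdiff i
  filter_upwards [hZg ((i : ℕ) + 1), hZg (i : ℕ), h3] with ω e1 e2 e3
  rw [e1, e2]
  exact e3
end
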